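/- arXiv:2008.06806 — 3 statements merged into one kernel-verified Lean document; each statement's English description precedes it below -/
import Mathlib

section
/- Let X be a proper geodesic δ-hyperbolic space such that the Gromov boundary ∂X contains at least two points, and suppose that X is K-roughly starlike from some point x ∈ X ∪ ∂X. Then there is a constant K' ≥ 0 such that X is K'-roughly starlike from all points of X ∪ ∂X. -/
set_option maxHeartbeats 1000000


open Metric Set Filter Topology
open scoped ENNReal Classical

noncomputable section

namespace Paper

variable {X Y : Type*}

/-- The distance function of a metric space. -/
def distFun (X : Type*) [MetricSpace X] : X → X → ℝ := fun p q => dist p q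

/-- `e` is a genuine metric distance function. -/
def IsMetricDist (e : X → X → ℝ) : Prop :=
  (∀ x, e x x = 0) ∧ (∀ x y, x ≠ y → 0 < e x y) ∧ (∀ x y, e x y = e y x) ∧
    ∀ x y z, e x z ≤ e x y + e y z

/-- Cauchy sequence with respect to the distance function `e`. -/
def CauchyWrt (e : X → X → ℝ) (u : ℕ → X) : Prop :=
  ∀ δ : ℝ, 0 < δ → ∃ N : ℕ, ∀ m, N ≤ m → ∀ n, N ≤ n → e (u m) (u n) < δ

/-- The sequence converges, w.r.t. `e`, to a point of the space. -/
def ConvWrt (e : X → X → ℝ) (u : ℕ → X) : Prop :=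
  ∃ y : X, Tendsto (fun n => e (u n) y) atTop (𝓝 0)

/-- The space is incomplete with respect to `e`:
some Cauchy sequence does not converge in the space. -/
def IncompleteWrt (e : X → X → ℝ) : Prop :=
  ∃ u : ℕ → X, CauchyWrt e u ∧ ¬ ConvWrt e u

/-- Distance from `x` to the metric boundary (the completion minus the space),
measured w.r.t. `e`: the infimum of the limits `lim_n e x (u n)` over all Cauchy
sequences `u` that have no limit in the space. -/
def bdryDistWrt (e : X → X → ℝ) (x : X) : ℝ :=
  sInf { r : ℝ | ∃ u : ℕ → X, CauchyWrt e u ∧ ¬ ConvWrt e u ∧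
    Tendsto (fun n => e x (u n)) atTop (𝓝 r) }

/-- Sequential compactness of a set w.r.t. `e`. -/
def SeqCompactWrt (e : X → X → ℝ) (s : Set X) : Prop :=
  ∀ u : ℕ → X, (∀ n, u n ∈ s) → ∃ y ∈ s, ∃ φ : ℕ → ℕ, StrictMono φ ∧
    Tendsto (fun n => e (u (φ n)) y) atTop (𝓝 0)

/-- Local compactness w.r.t. `e`: every point has arbitrarily small compact closed balls. -/
def LocallyCompactWrt (e : X → X → ℝ) : Prop :=
  ∀ x : X, ∀ r : ℝ, 0 < r → ∃ r' : ℝ, 0 < r' ∧ r' ≤ r ∧ SeqCompactWrt e { y | e x y ≤ r' }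

/-- Continuity of a curve on a set of parameters, w.r.t. `e`. -/
def ContinuousOnWrt (e : X → X → ℝ) (γ : ℝ → X) (I : Set ℝ) : Prop :=
  ∀ t ∈ I, ∀ δ : ℝ, 0 < δ → ∃ η : ℝ, 0 < η ∧ ∀ s ∈ I, |s - t| < η → e (γ s) (γ t) < δ

/-- The length (total variation) of the curve `γ` on the parameter set `I`, w.r.t. `e`. -/
def varOn (e : X → X → ℝ) (γ : ℝ → X) (I : Set ℝ) : ℝ≥0∞ :=
  ⨆ p : ℕ × { u : ℕ → ℝ // Monotone u ∧ ∀ i, u i ∈ I },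
    ∑ i ∈ Finset.range p.1, ENNReal.ofReal (e (γ (p.2.1 (i + 1))) (γ (p.2.1 i)))

/-- `X` with distance `e` is an `A`-uniform metric space: it is a locally compact,
incomplete metric space any two of whose points are joined by an `A`-uniform curve. -/
def IsUniformSpcWrt (e : X → X → ℝ) (A : ℝ) : Prop :=
  IsMetricDist e ∧ LocallyCompactWrt e ∧ IncompleteWrt e ∧
  ∀ x y : X, ∃ (a b : ℝ) (γ : ℝ → X), a ≤ b ∧ ContinuousOnWrt e γ (Icc a b) ∧
    γ a = x ∧ γ b = y ∧
    varOn e γ (Icc a b) ≤ ENNReal.ofReal (A * e x y) ∧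
    ∀ t ∈ Icc a b, min (varOn e γ (Icc a t)) (varOn e γ (Icc t b)) ≤
      ENNReal.ofReal (A * bdryDistWrt e (γ t))

/-- `f` is `∂`-Lipschitz with data `(L, lam)`. -/
def PartialLipschitzWrt (e : X → X → ℝ) (e' : Y → Y → ℝ) (L lam : ℝ) (f : X → Y) : Prop :=
  ∀ x y z : X, e y x < lam * bdryDistWrt e x → e z x < lam * bdryDistWrt e x →
    e' (f y) (f z) / bdryDistWrt e' (f x) ≤ L * (e y z / bdryDistWrt e x)

/-- `f` (with inverse `g`) is `∂`-biLipschitz with data `(L, lam)`. -/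
def PartialBiLipschitzWrt (e : X → X → ℝ) (e' : Y → Y → ℝ) (L lam : ℝ)
    (f : X → Y) (g : Y → X) : Prop :=
  1 ≤ L ∧ Function.LeftInverse g f ∧ Function.RightInverse g f ∧
    PartialLipschitzWrt e e' L lam f ∧ PartialLipschitzWrt e' e L lam g

/-- Cross-ratio of a quadruple of points, w.r.t. `e`. -/
def crossRatioWrt (e : X → X → ℝ) (x y z w : X) : ℝ := e x z * e y w / (e x y * e z w)

/-- `f` is `η`-quasimöbius. -/
def QuasiMobiusWrt (e : X → X → ℝ) (e' : Y → Y → ℝ) (η : ℝ → ℝ) (f : X → Y) : Prop :=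
  ∀ x y z w : X, x ≠ y → x ≠ z → x ≠ w → y ≠ z → y ≠ w → z ≠ w →
    crossRatioWrt e' (f x) (f y) (f z) (f w) ≤ η (crossRatioWrt e x y z w)

/-- `f` is `η`-quasisymmetric. -/
def QuasiSymmetricWrt (e : X → X → ℝ) (e' : Y → Y → ℝ) (η : ℝ → ℝ) (f : X → Y) : Prop :=
  ∀ x y z : X, ∀ t : ℝ, 0 ≤ t → e x y ≤ t * e x z → e' (f x) (f y) ≤ η t * e' (f x) (f z)

/-- `η` is (the restriction to `[0,∞)` of) a self-homeomorphism of `[0,∞)`: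
continuous, strictly increasing, fixing `0`, and tending to `∞`. -/
def IsControlFun (η : ℝ → ℝ) : Prop :=
  ContinuousOn η (Ici 0) ∧ StrictMonoOn η (Ici 0) ∧ η 0 = 0 ∧ Tendsto η atTop atTop

/-- The conformal deformation distance with conformal factor `ρ`: the infimum of
`∫ ρ ∘ γ` over all `1`-Lipschitz (w.r.t. `e`) curves joining `x` to `y`
(equivalently, the infimum of `∫_γ ρ ds` over all rectifiable curves joining `x` to `y`). -/
def confDistWrt (e : X → X → ℝ) (ρ : X → ℝ) (x y : X) : ℝ :=
  sInf { l : ℝ | ∃ (T : ℝ) (γ : ℝ → X), 0 ≤ T ∧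
    (∀ s ∈ Icc 0 T, ∀ t ∈ Icc 0 T, e (γ s) (γ t) ≤ |s - t|) ∧
    γ 0 = x ∧ γ T = y ∧ l = ∫ t in (0:ℝ)..T, ρ (γ t) }

/-- The quasihyperbolic metric of the space with distance `e`. -/
def quasiHypWrt (e : X → X → ℝ) : X → X → ℝ :=
  confDistWrt e fun z => (bdryDistWrt e z)⁻¹

/-- `γ` is a geodesic segment from `x` to `y`, parametrized by arclength on `[0, e x y]`. -/
def IsGeodesicSegWrt (e : X → X → ℝ) (γ : ℝ → X) (x y : X) : Prop :=
  γ 0 = x ∧ γ (e x y) = y ∧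
    ∀ s ∈ Icc 0 (e x y), ∀ t ∈ Icc 0 (e x y), e (γ s) (γ t) = |s - t|

/-- Any two points are joined by a geodesic. -/
def GeodesicSpaceWrt (e : X → X → ℝ) : Prop := ∀ x y : X, ∃ γ : ℝ → X, IsGeodesicSegWrt e γ x y

/-- The image of a geodesic segment. -/
def segImageWrt (e : X → X → ℝ) (γ : ℝ → X) (x y : X) : Set X := γ '' Icc 0 (e x y)

/-- `δ`-hyperbolicity: every geodesic triangle is `δ`-thin. -/
def DeltaHyperbolicWrt (e : X → X → ℝ) (δ : ℝ) : Prop :=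
  ∀ (x y z : X) (γ₁ γ₂ γ₃ : ℝ → X),
    IsGeodesicSegWrt e γ₁ x y → IsGeodesicSegWrt e γ₂ y z → IsGeodesicSegWrt e γ₃ z x →
    (∀ p ∈ segImageWrt e γ₁ x y, ∃ q ∈ segImageWrt e γ₂ y z ∪ segImageWrt e γ₃ z x, e p q ≤ δ) ∧
    (∀ p ∈ segImageWrt e γ₂ y z, ∃ q ∈ segImageWrt e γ₁ x y ∪ segImageWrt e γ₃ z x, e p q ≤ δ) ∧
    (∀ p ∈ segImageWrt e γ₃ z x, ∃ q ∈ segImageWrt e γ₁ x y ∪ segImageWrt e γ₂ y z, e p q ≤ δ)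

/-- `γ` is a geodesic ray (defined on `[0,∞)`). -/
def IsGeodesicRayWrt (e : X → X → ℝ) (γ : ℝ → X) : Prop :=
  ∀ s ∈ Ici (0:ℝ), ∀ t ∈ Ici (0:ℝ), e (γ s) (γ t) = |s - t|

/-- `γ` is a geodesic line. -/
def IsGeodesicLineWrt (e : X → X → ℝ) (γ : ℝ → X) : Prop :=
  ∀ s t : ℝ, e (γ s) (γ t) = |s - t|

/-- Two rays are at bounded distance from each other (represent the same
point of the Gromov boundary). -/
def RayEquivWrt (e : X → X → ℝ) (γ σ : ℝ → X) : Prop :=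
  ∃ c : ℝ, ∀ t ∈ Ici (0:ℝ), e (γ t) (σ t) ≤ c

/-- The infimal distance from `x` to the set `s`, w.r.t. `e`. -/
def infDistWrt (e : X → X → ℝ) (x : X) (s : Set X) : ℝ := sInf (e x '' s)

/-- `X` is `K`-roughly starlike from the point `z`. -/
def RoughStarlikeFromPointWrt (e : X → X → ℝ) (K : ℝ) (z : X) : Prop :=
  ∀ x : X, ∃ γ : ℝ → X, IsGeodesicRayWrt e γ ∧ γ 0 = z ∧ infDistWrt e x (γ '' Ici 0) ≤ K

/-- `X` is `K`-roughly starlike from the Gromov boundary point represented by the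
geodesic ray `ρ`: every point lies within distance `K` of a geodesic line starting
from that boundary point. -/
def RoughStarlikeFromRayWrt (e : X → X → ℝ) (K : ℝ) (ρ : ℝ → X) : Prop :=
  ∀ x : X, ∃ γ : ℝ → X, IsGeodesicLineWrt e γ ∧ RayEquivWrt e (fun t => γ (-t)) ρ ∧
    infDistWrt e x (range γ) ≤ K

/-- The Busemann function of the geodesic ray `ρ`:
`b_ρ(x) = lim_{t→∞} (e (ρ t) x - t) = inf_{t ≥ 0} (e (ρ t) x - t)`. -/
def busemannWrt (e : X → X → ℝ) (ρ : ℝ → X) (x : X) : ℝ :=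
  sInf ((fun t => e (ρ t) x - t) '' Ici 0)

/-- `b ∈ 𝔅̂(X)` (either a translated distance function or a translated Busemann
function), and `X` is `K`-roughly starlike from the basepoint of `b`. -/
def BhatStarlike (e : X → X → ℝ) (K : ℝ) (b : X → ℝ) : Prop :=
  (∃ (z : X) (s : ℝ), (∀ x, b x = e x z + s) ∧ RoughStarlikeFromPointWrt e K z) ∨
  (∃ (ρ : ℝ → X) (s : ℝ), IsGeodesicRayWrt e ρ ∧ (∀ x, b x = busemannWrt e ρ x + s) ∧
    RoughStarlikeFromRayWrt e K ρ)

/-- `ρ` is a Gehring–Hayman density with constant `M`: the `ρ`-length of any geodesic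
is at most `M` times the conformal distance between its endpoints. -/
def IsGHDensityWrt (e : X → X → ℝ) (M : ℝ) (ρ : X → ℝ) : Prop :=
  ∀ (x y : X) (γ : ℝ → X), IsGeodesicSegWrt e γ x y →
    (∫ t in (0:ℝ)..(e x y), ρ (γ t)) ≤ M * confDistWrt e ρ x y

/-- The density `ρ_{ε,b}(x) = e^{-ε b(x)}`. -/
def uniformizationDensity (b : X → ℝ) (ε : ℝ) : X → ℝ := fun x => Real.exp (-ε * b x)

/-- The Gromov product of `x` and `y` based at `z`. -/
def gromovProdWrt (e : X → X → ℝ) (z x y : X) : ℝ := (e x z + e y z - e x y) / 2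

/-- The sequence `u` represents the Gromov boundary point of the geodesic ray `ρ`
(with respect to the basepoint `z`). -/
def SeqRepWrt (e : X → X → ℝ) (z : X) (ρ : ℝ → X) (u : ℕ → X) : Prop :=
  Tendsto (fun n => gromovProdWrt e z (u n) (ρ n)) atTop atTop

/-- The Gromov product, based at `z`, of the two boundary points represented by the
geodesic rays `ρ` and `σ` (valued in `[0,∞]`). -/
def bGromovProdWrt (e : X → X → ℝ) (z : X) (ρ σ : ℝ → X) : ℝ≥0∞ :=
  ⨅ (u : { u : ℕ → X // SeqRepWrt e z ρ u }) (v : { v : ℕ → X // SeqRepWrt e z σ v }),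
    Filter.liminf (fun n => ENNReal.ofReal (gromovProdWrt e z (u.1 n) (v.1 n))) atTop

/-- `S(x) = sup_{ω ∈ ∂X} inf_{ξ ∈ ∂X} (ω|ξ)_x`. -/
def Sfun (e : X → X → ℝ) (x : X) : ℝ≥0∞ :=
  ⨆ (ω : { ρ : ℝ → X // IsGeodesicRayWrt e ρ }),
    ⨅ (ξ : { ρ : ℝ → X // IsGeodesicRayWrt e ρ }), bGromovProdWrt e x ω.1 ξ.1

/-- The filter at the left end of the interval `I`. -/
def leftEndFilter (I : Set ℝ) : Filter ℝ :=
  if BddBelow I then 𝓝[I] (sInf I) else atBot ⊓ 𝓟 I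

/-- The filter at the right end of the interval `I`. -/
def rightEndFilter (I : Set ℝ) : Filter ℝ :=
  if BddAbove I then 𝓝[I] (sSup I) else atTop ⊓ 𝓟 I

/-- `γ : I → Ω` is an `A`-uniform curve: it is rectifiable with endpoints
`γ₋, γ₊` in the completion `Ω̄` satisfying `ℓ(γ) ≤ A d(γ₋,γ₊)` (or non-rectifiable with
`d(γ(s),γ(t)) → ∞` towards the endpoints of `I`), and at every time `t` the shorter of
the two subcurves has length at most `A d_Ω(γ(t))`. -/
def IsUniformCurve {Ω : Type*} [MetricSpace Ω] (A : ℝ) (γ : ℝ → Ω) (I : Set ℝ) : Prop :=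
  I.Nonempty ∧ I.OrdConnected ∧ ContinuousOn γ I ∧
  ((varOn (distFun Ω) γ I ≠ ⊤ ∧
     ∃ gm gp : UniformSpace.Completion Ω,
       Tendsto (fun t => (γ t : UniformSpace.Completion Ω)) (leftEndFilter I) (𝓝 gm) ∧
       Tendsto (fun t => (γ t : UniformSpace.Completion Ω)) (rightEndFilter I) (𝓝 gp) ∧
       varOn (distFun Ω) γ I ≤ ENNReal.ofReal (A * dist gm gp)) ∨
   (varOn (distFun Ω) γ I = ⊤ ∧
     Tendsto (fun pq : ℝ × ℝ => dist (γ pq.1) (γ pq.2))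
       (leftEndFilter I ×ˢ rightEndFilter I) atTop)) ∧
  ∀ t ∈ I, min (varOn (distFun Ω) γ (I ∩ Iic t)) (varOn (distFun Ω) γ (I ∩ Ici t)) ≤
    ENNReal.ofReal (A * bdryDistWrt (distFun Ω) (γ t))

section Statement5Aux

variable {X : Type*} [MetricSpace X]

theorem seg_mem_image {g : ℝ → X} {a b : X} {t : ℝ} (ht : t ∈ Icc 0 (dist a b)) :
    g t ∈ segImageWrt (distFun X) g a b := ⟨t, ht, rfl⟩

theorem seg_def {g : ℝ → X} {a b : X} :
    IsGeodesicSegWrt (distFun X) g a b ↔ (g 0 = a ∧ g (dist a b) = b ∧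
      ∀ s ∈ Icc 0 (dist a b), ∀ t ∈ Icc 0 (dist a b), dist (g s) (g t) = |s - t|) := Iff.rfl

theorem ultralim [ProperSpace X] {ι : Type*} (U : Ultrafilter ι) (f : ι → X) (c : X) (R : ℝ)
    (h : ∀ᶠ i in U, dist c (f i) ≤ R) :
    ∃ y : X, dist c y ≤ R ∧ Tendsto f U (𝓝 y) := by
  have hle : (U.map f : Filter X) ≤ 𝓟 (closedBall c R) := by
    rw [Filter.le_principal_iff]
    exact Filter.mem_map.2 (h.mono fun i hi => by simpa [mem_closedBall, dist_comm] using hi)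
  obtain ⟨a, ha, hU⟩ := (isCompact_closedBall c R).ultrafilter_le_nhds (U.map f) hle
  exact ⟨a, by simpa [mem_closedBall, dist_comm] using ha, hU⟩

theorem seg_param_dist {g : ℝ → X} {a b : X} (hg : IsGeodesicSegWrt (distFun X) g a b)
    {s : ℝ} (hs : s ∈ Icc 0 (dist a b)) : dist a (g s) = s ∧ dist (g s) b = dist a b - s := by
  obtain ⟨h0, hL, hiso⟩ := seg_def.1 hg
  constructor
  · have := hiso 0 ⟨le_rfl, dist_nonneg⟩ s hs
    rw [h0] at this; rw [this, abs_of_nonpos (by linarith [hs.1])]; ring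
  · have := hiso s hs (dist a b) ⟨dist_nonneg, le_rfl⟩
    rw [hL] at this; rw [this, abs_of_nonpos (by linarith [hs.2])]; ring

theorem ray_dist {γ : ℝ → X} (hγ : IsGeodesicRayWrt (distFun X) γ) {s t : ℝ}
    (hs : 0 ≤ s) (hst : s ≤ t) : dist (γ s) (γ t) = t - s := by
  have : distFun X (γ s) (γ t) = |s - t| := hγ s hs t (le_trans hs hst)
  rw [show dist (γ s) (γ t) = distFun X (γ s) (γ t) from rfl, this,
    abs_of_nonpos (by linarith)]; ring

theorem ray_restrict {γ : ℝ → X} (hγ : IsGeodesicRayWrt (distFun X) γ) {b : ℝ} (hb : 0 ≤ b) :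
    IsGeodesicSegWrt (distFun X) γ (γ 0) (γ b) := by
  have hd : dist (γ 0) (γ b) = b := by rw [ray_dist hγ le_rfl hb]; ring
  rw [seg_def, hd]
  exact ⟨rfl, rfl, fun s hs t ht => hγ s hs.1 t ht.1⟩

theorem line_restrict {γ : ℝ → X} (hγ : IsGeodesicLineWrt (distFun X) γ) {a b : ℝ} (hab : a ≤ b) :
    IsGeodesicSegWrt (distFun X) (fun s => γ (a + s)) (γ a) (γ b) := by
  have hγ' : ∀ s t : ℝ, dist (γ s) (γ t) = |s - t| := hγ
  have hd : dist (γ a) (γ b) = b - a := by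
    rw [hγ' a b, abs_of_nonpos (by linarith)]; ring
  rw [seg_def, hd]
  refine ⟨by simp, by norm_num, fun s _ t _ => ?_⟩
  show dist (γ (a + s)) (γ (a + t)) = _
  rw [hγ']; congr 1; ring

theorem seg_reverse {g : ℝ → X} {a b : X} (hg : IsGeodesicSegWrt (distFun X) g a b) :
    IsGeodesicSegWrt (distFun X) (fun s => g (dist a b - s)) b a := by
  rw [seg_def] at hg
  obtain ⟨h0, hL, hiso⟩ := hg
  rw [seg_def, dist_comm b a]
  refine ⟨by simpa using hL, by simpa using h0, ?_⟩
  intro s hs t ht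
  have := hiso (dist a b - s) ⟨by linarith [hs.2], by linarith [hs.1]⟩
    (dist a b - t) ⟨by linarith [ht.2], by linarith [ht.1]⟩
  show dist (g (dist a b - s)) (g (dist a b - t)) = _
  rw [this, abs_sub_comm]; congr 1; ring

theorem seg_reverse_image {g : ℝ → X} {a b : X} :
    segImageWrt (distFun X) (fun s => g (dist a b - s)) b a ⊆ segImageWrt (distFun X) g a b := by
  rintro p ⟨s, hs, rfl⟩
  replace hs : s ∈ Icc 0 (dist b a) := hs
  rw [dist_comm b a] at hs
  refine ⟨dist a b - s, ?_, rfl⟩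
  have hdf : distFun X a b = dist a b := rfl
  rw [hdf]
  exact ⟨by linarith [hs.2], by linarith [hs.1]⟩

section Limits
variable [ProperSpace X] {ι : Type*} (U : Ultrafilter ι)

/-- clamp of a parameter into [0, L] -/
private def clp (L t : ℝ) : ℝ := max 0 (min t L)

private theorem clp_mem {L : ℝ} (hL : 0 ≤ L) (t : ℝ) : clp L t ∈ Icc 0 L :=
  ⟨le_max_left _ _, max_le hL (min_le_right _ _)⟩

private theorem clp_of_mem {L t : ℝ} (ht : t ∈ Icc 0 L) : clp L t = t := by
  rw [clp, min_eq_left ht.2, max_eq_right ht.1]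

/-- Lemma A : limit ray from a family of geodesic segments all starting at w. -/
theorem limit_ray {w : X} {a : ι → X} {g : ι → ℝ → X}
    (hg : ∀ i, IsGeodesicSegWrt (distFun X) (g i) w (a i))
    (hlen : Tendsto (fun i => dist w (a i)) U atTop)
    {x : X} {C : ℝ}
    (hx : ∀ᶠ i in U, ∃ t ∈ Icc 0 (dist w (a i)), dist x (g i t) ≤ C) :
    ∃ γ : ℝ → X, IsGeodesicRayWrt (distFun X) γ ∧ γ 0 = w ∧
      ∃ s ∈ Ici (0:ℝ), dist x (γ s) ≤ C := by
  set L : ι → ℝ := fun i => dist w (a i) with hLdef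
  have hL0 : ∀ i, 0 ≤ L i := fun i => dist_nonneg
  set G : ι → ℝ → X := fun i t => g i (clp (L i) t) with hGdef
  -- distance from w along G
  have hdG : ∀ i t, dist w (G i t) = clp (L i) t := fun i t =>
    (seg_param_dist (hg i) (clp_mem (hL0 i) t)).1
  have hbd : ∀ t : ℝ, ∀ i, dist w (G i t) ≤ |t| := by
    intro t i
    rw [hdG]
    calc clp (L i) t ≤ max 0 t := max_le_max le_rfl (min_le_left _ _)
    _ ≤ |t| := max_le (abs_nonneg t) (le_abs_self t)
  choose γ hγR hγT using fun t : ℝ => ultralim U (fun i => G i t) w |t|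
    (Eventually.of_forall (hbd t))
  have hkey : ∀ s, 0 ≤ s → ∀ t, 0 ≤ t → dist (γ s) (γ t) = |s - t| := by
    intro s hs t ht
    have hev : ∀ᶠ i in U, dist (G i s) (G i t) = |s - t| := by
      filter_upwards [hlen.eventually_ge_atTop (max s t)] with i hi
      have hLs : s ∈ Icc 0 (L i) := ⟨hs, le_trans (le_max_left _ _) hi⟩
      have hLt : t ∈ Icc 0 (L i) := ⟨ht, le_trans (le_max_right _ _) hi⟩
      have := (seg_def.1 (hg i)).2.2 s hLs t hLt
      simpa [hGdef, clp_of_mem hLs, clp_of_mem hLt] using this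
    have h1 : Tendsto (fun i => dist (G i s) (G i t)) U (𝓝 (dist (γ s) (γ t))) :=
      (hγT s).dist (hγT t)
    have h2 : Tendsto (fun i => dist (G i s) (G i t)) U (𝓝 |s - t|) :=
      tendsto_const_nhds.congr' (hev.mono fun i hi => hi.symm)
    exact tendsto_nhds_unique h1 h2
  have hz : γ 0 = w := by
    have : Tendsto (fun i => G i 0) U (𝓝 w) := by
      have : ∀ i, G i 0 = w := by
        intro i
        have : clp (L i) 0 = 0 := clp_of_mem ⟨le_rfl, hL0 i⟩
        simp only [hGdef, this]
        exact (seg_def.1 (hg i)).1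
      simpa [this] using tendsto_const_nhds
    exact tendsto_nhds_unique (hγT 0) this
  -- the parameter of the closest point
  set t0 : ι → ℝ := fun i =>
    if h : ∃ t ∈ Icc 0 (L i), dist x (g i t) ≤ C then h.choose else 0 with ht0def
  have ht0good : ∀ᶠ i in U, t0 i ∈ Icc 0 (L i) ∧ dist x (g i (t0 i)) ≤ C := by
    filter_upwards [hx] with i hi
    rw [ht0def]; simp only [dif_pos (show ∃ t ∈ Icc 0 (L i), dist x (g i t) ≤ C from hi)]
    exact ⟨hi.choose_spec.1, hi.choose_spec.2⟩
  have ht0bd : ∀ᶠ i in U, dist (0:ℝ) (t0 i) ≤ dist w x + C := by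
    filter_upwards [ht0good] with i hi
    have h1 : dist w (g i (t0 i)) = t0 i := (seg_param_dist (hg i) hi.1).1
    rw [Real.dist_eq, abs_of_nonpos (by linarith [hi.1.1] : (0:ℝ) - t0 i ≤ 0)]
    linarith [dist_triangle w x (g i (t0 i)), hi.2]
  obtain ⟨s0, _, hs0T⟩ := ultralim U t0 (0:ℝ) (dist w x + C) ht0bd
  have hs0 : 0 ≤ s0 := ge_of_tendsto hs0T (ht0good.mono fun i hi => hi.1.1)
  refine ⟨γ, fun s hs t ht => hkey s hs t ht, hz, s0, hs0, ?_⟩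
  have h1 : Tendsto (fun i => dist x (G i s0)) U (𝓝 (dist x (γ s0))) :=
    tendsto_const_nhds.dist (hγT s0)
  have h3 : ∀ᶠ i in U, dist x (G i s0) ≤ C + dist (t0 i) s0 := by
    filter_upwards [ht0good, hlen.eventually_ge_atTop s0] with i hi hLi
    have hcl : clp (L i) s0 = s0 := clp_of_mem ⟨hs0, hLi⟩
    have hdd : dist (g i (t0 i)) (G i s0) = dist (t0 i) s0 := by
      have := (seg_def.1 (hg i)).2.2 (t0 i) hi.1 s0 ⟨hs0, hLi⟩
      simp only [hGdef, hcl, this, Real.dist_eq]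
    calc dist x (G i s0) ≤ dist x (g i (t0 i)) + dist (g i (t0 i)) (G i s0) :=
          dist_triangle _ _ _
      _ ≤ C + dist (t0 i) s0 := by rw [hdd]; exact add_le_add_left hi.2 _
  have h4 : Tendsto (fun i => C + dist (t0 i) s0) U (𝓝 (C + 0)) :=
    tendsto_const_nhds.add (by simpa using hs0T.dist (tendsto_const_nhds (x := s0)))
  have := le_of_tendsto_of_tendsto h1 h4 h3
  simpa using this

theorem clp_lip (L a b : ℝ) : |clp L a - clp L b| ≤ |a - b| := by
  unfold clp
  calc |max 0 (min a L) - max 0 (min b L)| ≤ max |0 - 0| |min a L - min b L| :=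
        abs_max_sub_max_le_max _ _ _ _
    _ ≤ |min a L - min b L| := by simp
    _ ≤ max |a - b| |L - L| := abs_min_sub_min_le_max _ _ _ _
    _ ≤ |a - b| := by simp

/-- Lemma B : limit line from a family of geodesic segments with marked points. -/
theorem limit_line {p q : ι → X} {g : ι → ℝ → X}
    (hg : ∀ i, IsGeodesicSegWrt (distFun X) (g i) (p i) (q i))
    {u : ι → ℝ} (hu : ∀ᶠ i in U, u i ∈ Icc 0 (dist (p i) (q i)))
    {x : X} {C : ℝ} (hx : ∀ᶠ i in U, dist x (g i (u i)) ≤ C)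
    (hleft : Tendsto u U atTop)
    (hright : Tendsto (fun i => dist (p i) (q i) - u i) U atTop) :
    ∃ γ : ℝ → X, IsGeodesicLineWrt (distFun X) γ ∧ dist x (γ 0) ≤ C ∧
      ∀ s : ℝ, Tendsto (fun i => g i (clp (dist (p i) (q i)) (u i + s))) U (𝓝 (γ s)) := by
  set L : ι → ℝ := fun i => dist (p i) (q i) with hLdef
  have hL0 : ∀ i, 0 ≤ L i := fun i => dist_nonneg
  set G : ι → ℝ → X := fun i s => g i (clp (L i) (u i + s)) with hGdef
  have hbd : ∀ s : ℝ, ∀ᶠ i in U, dist x (G i s) ≤ C + |s| := by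
    intro s
    filter_upwards [hu, hx] with i hui hxi
    have h1 : dist (g i (u i)) (G i s) = |u i - clp (L i) (u i + s)| := by
      exact (seg_def.1 (hg i)).2.2 (u i) hui (clp (L i) (u i + s)) (clp_mem (hL0 i) _)
    have h2 : |u i - clp (L i) (u i + s)| ≤ |s| := by
      have := clp_lip (L i) (u i) (u i + s)
      rw [clp_of_mem hui] at this
      calc |u i - clp (L i) (u i + s)| ≤ |u i - (u i + s)| := this
        _ = |s| := by rw [abs_sub_comm]; congr 1; ring
    calc dist x (G i s) ≤ dist x (g i (u i)) + dist (g i (u i)) (G i s) := dist_triangle _ _ _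
      _ ≤ C + |s| := by rw [h1]; exact add_le_add hxi h2
  choose γ hγR hγT using fun s : ℝ => ultralim U (fun i => G i s) x (C + |s|) (hbd s)
  have hline : ∀ s t : ℝ, dist (γ s) (γ t) = |s - t| := by
    intro s t
    have hev : ∀ᶠ i in U, dist (G i s) (G i t) = |s - t| := by
      filter_upwards [hu, hleft.eventually_ge_atTop (max (-s) (-t)),
        hright.eventually_ge_atTop (max s t)] with i hui hl hr
      have hs' : u i + s ∈ Icc 0 (L i) := ⟨by have := le_trans (le_max_left (-s) (-t)) hl; linarith,
        by have := le_trans (le_max_left s t) hr; linarith⟩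
      have ht' : u i + t ∈ Icc 0 (L i) := ⟨by have := le_trans (le_max_right (-s) (-t)) hl; linarith,
        by have := le_trans (le_max_right s t) hr; linarith⟩
      have := (seg_def.1 (hg i)).2.2 (u i + s) hs' (u i + t) ht'
      simp only [hGdef, clp_of_mem hs', clp_of_mem ht']
      rw [this]; congr 1; ring
    exact tendsto_nhds_unique ((hγT s).dist (hγT t))
      (tendsto_const_nhds.congr' (hev.mono fun i hi => hi.symm))
  refine ⟨γ, hline, by simpa using hγR 0, hγT⟩

end Limits

section Geometry

/-- Component 1: bounded Gromov products for non-equivalent rays. -/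
theorem product_bound {δ : ℝ} (hδ : 0 ≤ δ) (hgeo : GeodesicSpaceWrt (distFun X))
    (hhyp : DeltaHyperbolicWrt (distFun X) δ) {ρ₁ ρ₂ : ℝ → X} (h₁ : IsGeodesicRayWrt (distFun X) ρ₁)
    (h₂ : IsGeodesicRayWrt (distFun X) ρ₂) (hne : ¬ RayEquivWrt (distFun X) ρ₁ ρ₂) :
    ∃ P : ℝ, 0 ≤ P ∧ ∀ z : X, ∀ m : ℝ, 0 ≤ m →
      dist z (ρ₁ m) + dist z (ρ₂ m) - dist (ρ₁ m) (ρ₂ m) ≤ 2 * (P + dist z (ρ₁ 0)) := by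
  set d₀ := dist (ρ₁ 0) (ρ₂ 0) with hd₀
  have hd₀0 : 0 ≤ d₀ := dist_nonneg
  rw [RayEquivWrt] at hne
  push_neg at hne
  obtain ⟨t₀, ht₀0, ht₀⟩ := hne (3 * d₀ + 4 * δ)
  replace ht₀0 : (0:ℝ) ≤ t₀ := ht₀0
  replace ht₀ : 3 * d₀ + 4 * δ < dist (ρ₁ t₀) (ρ₂ t₀) := ht₀
  refine ⟨t₀ + δ, by linarith, ?_⟩
  -- base case at z = ρ₁ 0
  have base : ∀ m : ℝ, 0 ≤ m →
      dist (ρ₁ 0) (ρ₁ m) + dist (ρ₁ 0) (ρ₂ m) - dist (ρ₁ m) (ρ₂ m) ≤ 2 * (t₀ + δ) := by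
    intro m hm
    by_contra hcon
    push_neg at hcon
    have hA : dist (ρ₁ 0) (ρ₁ m) = m := by rw [ray_dist h₁ le_rfl hm]; ring
    rw [hA] at hcon
    set D₂ := dist (ρ₁ 0) (ρ₂ m) with hD₂
    set D₁₂ := dist (ρ₁ m) (ρ₂ m) with hD₁₂
    have htm : t₀ + δ < m := by
      have : D₂ ≤ m + D₁₂ := by
        calc D₂ ≤ dist (ρ₁ 0) (ρ₁ m) + dist (ρ₁ m) (ρ₂ m) := dist_triangle _ _ _
        _ = m + D₁₂ := by rw [hA]
      linarith
    obtain ⟨g₂, hg₂⟩ := hgeo (ρ₁ m) (ρ₂ m)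
    obtain ⟨g₃, hg₃⟩ := hgeo (ρ₂ m) (ρ₁ 0)
    have hseg₁ : IsGeodesicSegWrt (distFun X) ρ₁ (ρ₁ 0) (ρ₁ m) := ray_restrict h₁ hm
    obtain ⟨B1, -, -⟩ := hhyp (ρ₁ 0) (ρ₁ m) (ρ₂ m) ρ₁ g₂ g₃ hseg₁ hg₂ hg₃
    have hpmem : ρ₁ t₀ ∈ segImageWrt (distFun X) ρ₁ (ρ₁ 0) (ρ₁ m) := by
      apply seg_mem_image
      rw [hA]; exact ⟨ht₀0, by linarith⟩
    obtain ⟨q, hq, hdq⟩ := B1 (ρ₁ t₀) hpmem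
    replace hdq : dist (ρ₁ t₀) q ≤ δ := hdq
    have hpt₀ : dist (ρ₁ 0) (ρ₁ t₀) = t₀ := by rw [ray_dist h₁ le_rfl ht₀0]; ring
    rcases hq with hq | hq
    · -- q on [ρ₁ m, ρ₂ m]
      obtain ⟨τ, hτ, rfl⟩ := hq
      replace hτ : τ ∈ Icc 0 D₁₂ := hτ
      obtain ⟨hq1, hq2⟩ := seg_param_dist hg₂ hτ
      -- hq1 : dist (ρ₁ m) (g₂ τ) = τ, hq2 : dist (g₂ τ) (ρ₂ m) = D₁₂ - τ
      have h5 : dist (ρ₁ m) (ρ₁ t₀) = m - t₀ := by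
        rw [dist_comm]; exact ray_dist h₁ ht₀0 (by linarith)
      have h6 : m - t₀ - δ ≤ τ := by
        have h' := dist_triangle (ρ₁ m) (g₂ τ) (ρ₁ t₀)
        have c1 : dist (g₂ τ) (ρ₁ t₀) = dist (ρ₁ t₀) (g₂ τ) := dist_comm _ _
        rw [← hq1]; linarith
      have h7 : D₂ ≤ t₀ + δ + (D₁₂ - τ) := by
        calc D₂ ≤ dist (ρ₁ 0) (ρ₁ t₀) + dist (ρ₁ t₀) (g₂ τ) + dist (g₂ τ) (ρ₂ m) :=
              dist_triangle4 _ _ _ _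
          _ ≤ t₀ + δ + (D₁₂ - τ) := by rw [hpt₀, hq2]; linarith
      linarith
    · -- q on [ρ₂ m, ρ₁ 0] : second triangle
      obtain ⟨τ, hτ, rfl⟩ := hq
      have hseg₂ : IsGeodesicSegWrt (distFun X) ρ₂ (ρ₂ 0) (ρ₂ m) := ray_restrict h₂ hm
      obtain ⟨g₄, hg₄⟩ := hgeo (ρ₁ 0) (ρ₂ 0)
      obtain ⟨B1', -, -⟩ := hhyp (ρ₂ m) (ρ₁ 0) (ρ₂ 0) g₃ g₄ ρ₂ hg₃ hg₄ hseg₂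
      obtain ⟨r, hr, hdr⟩ := B1' (g₃ τ) ⟨τ, hτ, rfl⟩
      replace hdr : dist (g₃ τ) r ≤ δ := hdr
      rcases hr with hr | hr
      · -- r on [ρ₁ 0, ρ₂ 0]
        obtain ⟨β, hβ, rfl⟩ := hr
        replace hβ : β ∈ Icc 0 d₀ := hβ
        have h8 : dist (ρ₁ 0) (g₄ β) = β := (seg_param_dist hg₄ hβ).1
        have h9 : t₀ ≤ d₀ + 2 * δ := by
          have t4 := dist_triangle4 (ρ₁ 0) (g₄ β) (g₃ τ) (ρ₁ t₀)
          have c1 : dist (g₄ β) (g₃ τ) = dist (g₃ τ) (g₄ β) := dist_comm _ _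
          have c2 : dist (g₃ τ) (ρ₁ t₀) = dist (ρ₁ t₀) (g₃ τ) := dist_comm _ _
          linarith [hβ.2]
        have h10 : dist (ρ₁ t₀) (ρ₂ t₀) ≤ t₀ + d₀ + t₀ := by
          have t4 := dist_triangle4 (ρ₁ t₀) (ρ₁ 0) (ρ₂ 0) (ρ₂ t₀)
          have c1 : dist (ρ₁ t₀) (ρ₁ 0) = dist (ρ₁ 0) (ρ₁ t₀) := dist_comm _ _
          have c2 : dist (ρ₂ 0) (ρ₂ t₀) = t₀ - 0 := ray_dist h₂ le_rfl ht₀0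
          linarith
        linarith
      · -- r = ρ₂ s
        obtain ⟨s, hs, rfl⟩ := hr
        have hdm : dist (ρ₂ 0) (ρ₂ m) = m := by rw [ray_dist h₂ le_rfl hm]; ring
        replace hs : s ∈ Icc 0 (dist (ρ₂ 0) (ρ₂ m)) := hs
        rw [hdm] at hs
        have h8 : dist (ρ₂ 0) (ρ₂ s) = s := by rw [ray_dist h₂ le_rfl hs.1]; ring
        have h11 : dist (ρ₁ t₀) (ρ₂ s) ≤ 2 * δ := by
          calc dist (ρ₁ t₀) (ρ₂ s) ≤ dist (ρ₁ t₀) (g₃ τ) + dist (g₃ τ) (ρ₂ s) :=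
                dist_triangle _ _ _
            _ ≤ 2 * δ := by linarith
        have h12 : dist (ρ₂ 0) (ρ₁ t₀) ≤ d₀ + t₀ := by
          have := dist_triangle (ρ₂ 0) (ρ₁ 0) (ρ₁ t₀)
          rw [dist_comm (ρ₂ 0) (ρ₁ 0), hpt₀] at this; linarith
        have h13 : t₀ - d₀ ≤ dist (ρ₂ 0) (ρ₁ t₀) := by
          have := dist_triangle (ρ₁ 0) (ρ₂ 0) (ρ₁ t₀)
          rw [hpt₀] at this
          linarith
        have h14 : |s - t₀| ≤ d₀ + 2 * δ := by
          rw [abs_le]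
          have hup : s ≤ dist (ρ₂ 0) (ρ₁ t₀) + 2 * δ := by
            have := dist_triangle (ρ₂ 0) (ρ₁ t₀) (ρ₂ s)
            rw [← h8]; linarith
          have hlo : dist (ρ₂ 0) (ρ₁ t₀) - 2 * δ ≤ s := by
            have := dist_triangle (ρ₂ 0) (ρ₂ s) (ρ₁ t₀)
            rw [h8, dist_comm (ρ₂ s) (ρ₁ t₀)] at this
            linarith
          constructor <;> linarith
        have h15 : dist (ρ₂ s) (ρ₂ t₀) = |s - t₀| := by
          have := h₂ s hs.1 t₀ ht₀0
          exact this
        have : dist (ρ₁ t₀) (ρ₂ t₀) ≤ 2 * δ + |s - t₀| := by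
          have := dist_triangle (ρ₁ t₀) (ρ₂ s) (ρ₂ t₀)
          rw [h15] at this; linarith
        linarith
  -- basepoint change
  intro z m hm
  have h1 := dist_triangle z (ρ₁ 0) (ρ₁ m)
  have h2' := dist_triangle z (ρ₁ 0) (ρ₂ m)
  have := base m hm
  linarith


theorem seg_image_compact {g : ℝ → X} {a b : X} (hg : IsGeodesicSegWrt (distFun X) g a b) :
    IsCompact (segImageWrt (distFun X) g a b) := by
  have hiso := (seg_def.1 hg).2.2
  have hcont : ContinuousOn g (Icc 0 (dist a b)) := by
    have : LipschitzOnWith 1 g (Icc 0 (dist a b)) := by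
      rw [lipschitzOnWith_iff_dist_le_mul]
      intro s hs t ht
      rw [hiso s hs t ht, Real.dist_eq]
      simp
    exact this.continuousOn
  exact isCompact_Icc.image_of_continuousOn hcont

theorem seg_image_nonempty {g : ℝ → X} {a b : X} :
    (segImageWrt (distFun X) g a b).Nonempty := by
  refine ⟨g 0, 0, ?_, rfl⟩
  have : distFun X a b = dist a b := rfl
  rw [this]
  exact ⟨le_rfl, dist_nonneg⟩

theorem mem_seg_start {g : ℝ → X} {a b : X} (hg : IsGeodesicSegWrt (distFun X) g a b) :
    a ∈ segImageWrt (distFun X) g a b := by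
  refine ⟨0, ?_, (seg_def.1 hg).1⟩
  have : distFun X a b = dist a b := rfl
  rw [this]
  exact ⟨le_rfl, dist_nonneg⟩

theorem mem_seg_end {g : ℝ → X} {a b : X} (hg : IsGeodesicSegWrt (distFun X) g a b) :
    b ∈ segImageWrt (distFun X) g a b := by
  have h : distFun X a b = dist a b := rfl
  refine ⟨dist a b, ?_, ?_⟩
  · rw [h]; exact ⟨dist_nonneg, le_rfl⟩
  · rw [← h]; exact (seg_def.1 hg).2.1

/-- Lemma D : some point of a geodesic is within (p|q)_z + 3δ of z. -/
theorem near_geodesic {δ : ℝ} (hδ : 0 ≤ δ) (hgeo : GeodesicSpaceWrt (distFun X))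
    (hhyp : DeltaHyperbolicWrt (distFun X) δ) (z p q : X) {g : ℝ → X}
    (hg : IsGeodesicSegWrt (distFun X) g p q) :
    ∃ τ ∈ Icc 0 (dist p q), dist z (g τ) ≤ (dist z p + dist z q - dist p q) / 2 + 3 * δ := by
  obtain ⟨g₂, hg₂⟩ := hgeo q z
  obtain ⟨g₃, hg₃⟩ := hgeo z p
  obtain ⟨B1, -, -⟩ := hhyp p q z g g₂ g₃ hg hg₂ hg₃
  set L := dist p q with hL
  have hL0 : (0:ℝ) ≤ L := dist_nonneg
  set I₂ := segImageWrt (distFun X) g₂ q z with hI₂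
  set I₃ := segImageWrt (distFun X) g₃ z p with hI₃
  have hI₂c : IsCompact I₂ := seg_image_compact hg₂
  have hI₃c : IsCompact I₃ := seg_image_compact hg₃
  have hI₂n : I₂.Nonempty := seg_image_nonempty
  have hI₃n : I₃.Nonempty := seg_image_nonempty
  have hdisj : ∀ τ ∈ Icc 0 L, infDist (g τ) I₃ ≤ δ ∨ infDist (g τ) I₂ ≤ δ := by
    intro τ hτ
    obtain ⟨w, hw, hdw⟩ := B1 (g τ) (seg_mem_image hτ)
    replace hdw : dist (g τ) w ≤ δ := hdw
    rcases hw with hw | hw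
    · exact Or.inr (le_trans (infDist_le_dist_of_mem hw) hdw)
    · exact Or.inl (le_trans (infDist_le_dist_of_mem hw) hdw)
  have hlip : ∀ (Iset : Set X), ∀ s ∈ Icc 0 L, ∀ t ∈ Icc 0 L,
      infDist (g s) Iset ≤ infDist (g t) Iset + |s - t| := by
    intro Iset s hs t ht
    have := infDist_le_infDist_add_dist (x := g s) (y := g t) (s := Iset)
    rwa [(seg_def.1 hg).2.2 s hs t ht] at this
  set S := {τ | τ ∈ Icc 0 L ∧ infDist (g τ) I₃ ≤ δ} with hS
  have h0S : (0:ℝ) ∈ S := by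
    refine ⟨⟨le_rfl, hL0⟩, ?_⟩
    have : g 0 = p := (seg_def.1 hg).1
    rw [this]
    exact le_trans (le_of_eq (infDist_zero_of_mem (mem_seg_end hg₃))) hδ
  have hSbdd : BddAbove S := ⟨L, fun τ hτ => hτ.1.2⟩
  set τ' := sSup S with hτ'
  have hτ'0 : 0 ≤ τ' := le_csSup hSbdd h0S
  have hτ'L : τ' ≤ L := csSup_le ⟨0, h0S⟩ fun τ hτ => hτ.1.2
  have hτ'I : τ' ∈ Icc 0 L := ⟨hτ'0, hτ'L⟩
  have hf3 : infDist (g τ') I₃ ≤ δ := by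
    refine le_of_forall_pos_le_add fun ε hε => ?_
    rcases lt_or_ge τ' ε with h | h
    · -- 0 ∈ S is within ε
      have := hlip I₃ τ' hτ'I 0 ⟨le_rfl, hL0⟩
      rw [sub_zero, abs_of_nonneg hτ'0] at this
      calc infDist (g τ') I₃ ≤ infDist (g 0) I₃ + τ' := by simpa using this
        _ ≤ δ + ε := add_le_add h0S.2 h.le
    · obtain ⟨τ, hτS, hττ⟩ := exists_lt_of_lt_csSup ⟨0, h0S⟩ (by linarith : τ' - ε < sSup S)
      have hlp := hlip I₃ τ' hτ'I τ hτS.1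
      have hτle : τ ≤ τ' := le_csSup hSbdd hτS
      rw [abs_of_nonneg (by linarith)] at hlp
      calc infDist (g τ') I₃ ≤ infDist (g τ) I₃ + (τ' - τ) := hlp
        _ ≤ δ + ε := by linarith [hτS.2]
  have hf2 : infDist (g τ') I₂ ≤ δ := by
    refine le_of_forall_pos_le_add fun ε hε => ?_
    rcases lt_or_ge (L - τ') ε with h | h
    · have := hlip I₂ τ' hτ'I L ⟨hL0, le_rfl⟩
      rw [abs_of_nonpos (by linarith)] at this
      have hgL : g L = q := (seg_def.1 hg).2.1
      have : infDist (g τ') I₂ ≤ infDist (g L) I₂ + (L - τ') := by linarith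
      rw [hgL] at this
      calc infDist (g τ') I₂ ≤ infDist q I₂ + (L - τ') := this
        _ ≤ 0 + (δ + ε) := by
            have : infDist q I₂ = 0 := infDist_zero_of_mem (mem_seg_start hg₂)
            rw [this]; linarith
        _ = δ + ε := by ring
    · set τ := τ' + min ε (L - τ') / 2 with hτdef
      have hmin : 0 < min ε (L - τ') := lt_min hε (by linarith)
      have hττ' : τ' < τ := by rw [hτdef]; linarith
      have hτI : τ ∈ Icc 0 L := ⟨by linarith, by
        have : min ε (L - τ') ≤ L - τ' := min_le_right _ _
        rw [hτdef]; linarith⟩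
      have hτnS : τ ∉ S := fun hmem => absurd (le_csSup hSbdd hmem) (by linarith)
      have hτ2 : infDist (g τ) I₂ ≤ δ := by
        rcases hdisj τ hτI with h3 | h2
        · exact absurd ⟨hτI, h3⟩ hτnS
        · exact h2
      have := hlip I₂ τ' hτ'I τ hτI
      rw [abs_of_nonpos (by linarith)] at this
      have hmle : min ε (L - τ') ≤ ε := min_le_left _ _
      calc infDist (g τ') I₂ ≤ infDist (g τ) I₂ + (τ - τ') := by linarith
        _ ≤ δ + ε := by rw [hτdef]; linarith
  obtain ⟨a, haI, haeq⟩ := hI₃c.exists_infDist_eq_dist hI₃n (g τ')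
  obtain ⟨b, hbI, hbeq⟩ := hI₂c.exists_infDist_eq_dist hI₂n (g τ')
  have hda : dist (g τ') a ≤ δ := by rw [← haeq]; exact hf3
  have hdb : dist (g τ') b ≤ δ := by rw [← hbeq]; exact hf2
  obtain ⟨α, hα, rfl⟩ := haI
  obtain ⟨β, hβ, rfl⟩ := hbI
  replace hα : α ∈ Icc 0 (dist z p) := hα
  replace hβ : β ∈ Icc 0 (dist q z) := hβ
  obtain ⟨ha1, ha2⟩ := seg_param_dist hg₃ hα  -- dist z (g₃ α) = α, dist (g₃ α) p = dist z p - α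
  obtain ⟨hb1, hb2⟩ := seg_param_dist hg₂ hβ  -- dist q (g₂ β) = β, dist (g₂ β) z = dist q z - β
  obtain ⟨hp1, hp2⟩ := seg_param_dist hg hτ'I -- dist p (g τ') = τ', dist (g τ') q = L - τ'
  refine ⟨τ', hτ'I, ?_⟩
  -- τ' ≤ dist z p - α + δ
  have k1 : τ' ≤ dist z p - α + δ := by
    have := dist_triangle p (g₃ α) (g τ')
    have c1 : dist (g₃ α) (g τ') = dist (g τ') (g₃ α) := dist_comm _ _
    have c2 : dist p (g₃ α) = dist (g₃ α) p := dist_comm _ _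
    linarith
  have k2 : α - 2 * δ ≤ dist z (g τ') := by
    have := dist_triangle z (g τ') (g₃ α)
    linarith
  have k3 : L - τ' ≤ δ + (dist q z - dist z (g₂ β)) := by
    have := dist_triangle (g τ') (g₂ β) q
    have c1 : dist (g₂ β) q = dist q (g₂ β) := dist_comm _ _
    have c2 : dist (g₂ β) z = dist z (g₂ β) := dist_comm _ _
    linarith
  have k4 : dist z (g τ') - δ ≤ dist z (g₂ β) := by
    have := dist_triangle z (g₂ β) (g τ')
    have c1 : dist (g₂ β) (g τ') = dist (g τ') (g₂ β) := dist_comm _ _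
    linarith
  have k5 : dist z (g τ') ≤ α + δ := by
    have := dist_triangle z (g₃ α) (g τ')
    have c1 : dist (g₃ α) (g τ') = dist (g τ') (g₃ α) := dist_comm _ _
    linarith
  have hzq : dist z q = dist q z := dist_comm _ _
  linarith


end Geometry

section S1
variable {X : Type*} [MetricSpace X]

theorem exists_close_of_infDistWrt {x : X} {s : Set X} (hs : s.Nonempty) {K : ℝ}
    (h : infDistWrt (distFun X) x s ≤ K) : ∃ y ∈ s, dist x y < K + 1 := by
  have hne : (distFun X x '' s).Nonempty := hs.image _
  have hlt : sInf (distFun X x '' s) < K + 1 := lt_of_le_of_lt h (by linarith)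
  obtain ⟨d, hd, hdlt⟩ := exists_lt_of_csInf_lt hne hlt
  obtain ⟨y, hy, rfl⟩ := hd
  exact ⟨y, hy, hdlt⟩

theorem infDistWrt_le {x : X} {s : Set X} {y : X} (hy : y ∈ s) :
    infDistWrt (distFun X) x s ≤ dist x y := by
  apply csInf_le
  · exact ⟨0, fun d ⟨y', _, hy'⟩ => hy' ▸ dist_nonneg⟩
  · exact ⟨y, hy, rfl⟩

/-- Step 1: every point is uniformly close to a geodesic segment with both endpoints far. -/
theorem far_segments {δ K : ℝ} (hδ : 0 ≤ δ) (hK : 0 ≤ K)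
    (hgeo : GeodesicSpaceWrt (distFun X)) (hhyp : DeltaHyperbolicWrt (distFun X) δ)
    (htwo : ∃ ρ₁ ρ₂ : ℝ → X, IsGeodesicRayWrt (distFun X) ρ₁ ∧
      IsGeodesicRayWrt (distFun X) ρ₂ ∧ ¬ RayEquivWrt (distFun X) ρ₁ ρ₂)
    (hstar : (∃ z : X, RoughStarlikeFromPointWrt (distFun X) K z) ∨
      (∃ ρ : ℝ → X, IsGeodesicRayWrt (distFun X) ρ ∧ RoughStarlikeFromRayWrt (distFun X) K ρ)) :
    ∃ C : ℝ, 0 ≤ C ∧ ∀ x : X, ∀ r : ℝ, 0 ≤ r → ∃ (a b : X) (g : ℝ → X) (t : ℝ),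
      IsGeodesicSegWrt (distFun X) g a b ∧ t ∈ Icc 0 (dist a b) ∧ dist x (g t) ≤ C ∧
      r ≤ dist x a ∧ r ≤ dist x b := by
  rcases hstar with ⟨z, hz⟩ | ⟨ρ₀, hρ₀ray, hρ₀⟩
  swap
  · -- starlike from a boundary point : lines give segments directly
    refine ⟨K + 1, by linarith, fun x r hr => ?_⟩
    obtain ⟨γ, hline, -, hinf⟩ := hρ₀ x
    obtain ⟨y, ⟨t₀, rfl⟩, hy⟩ := exists_close_of_infDistWrt (range_nonempty γ) hinf
    set n := r + K + 1 with hn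
    have hn0 : 0 ≤ n := by linarith
    have hline' : ∀ s t : ℝ, dist (γ s) (γ t) = |s - t| := hline
    have hseg := line_restrict hline (show t₀ - n ≤ t₀ + n by linarith)
    have hdab : dist (γ (t₀ - n)) (γ (t₀ + n)) = 2 * n := by
      rw [hline', abs_of_nonpos (by linarith)]; ring
    refine ⟨γ (t₀ - n), γ (t₀ + n), _, n, hseg, ?_, ?_, ?_, ?_⟩
    · rw [hdab]; exact ⟨hn0, by linarith⟩
    · have he : t₀ - n + n = t₀ := by ring
      show dist x (γ (t₀ - n + n)) ≤ K + 1
      rw [he]; linarith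
    · have h1 : dist (γ t₀) (γ (t₀ - n)) = n := by
        rw [hline', abs_of_nonneg (by linarith)]; ring
      have := dist_triangle x (γ t₀) (γ (t₀ - n))
      have h2 := dist_triangle (γ t₀) x (γ (t₀ - n))
      have c1 : dist (γ t₀) x = dist x (γ t₀) := dist_comm _ _
      linarith
    · have h1 : dist (γ t₀) (γ (t₀ + n)) = n := by
        rw [hline', abs_of_nonpos (by linarith)]; ring
      have h2 := dist_triangle (γ t₀) x (γ (t₀ + n))
      have c1 : dist (γ t₀) x = dist x (γ t₀) := dist_comm _ _
      linarith
  · -- starlike from the point z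
    obtain ⟨ρ₁, ρ₂, h₁, h₂, hne⟩ := htwo
    obtain ⟨P, hP0, hPz⟩ := product_bound hδ hgeo hhyp h₁ h₂ hne
    set Pz := P + dist z (ρ₁ 0) with hPzdef
    have hPz0 : 0 ≤ Pz := by have := dist_nonneg (x := z) (y := ρ₁ 0); linarith
    refine ⟨K + 1 + 2 * Pz + 5 * δ, by linarith, fun x r hr => ?_⟩
    obtain ⟨γ, hγray, hγ0, hγinf⟩ := hz x
    have hIci : (γ '' Ici 0).Nonempty := ⟨γ 0, 0, Set.self_mem_Ici, rfl⟩
    obtain ⟨y, ⟨s₀, hs₀0, rfl⟩, hy⟩ := exists_close_of_infDistWrt hIci hγinf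
    replace hs₀0 : (0:ℝ) ≤ s₀ := hs₀0
    set n := s₀ + r + K + 2 with hn
    have hn0 : 0 ≤ n := by linarith
    set m := r + dist z x + dist z (ρ₁ 0) + dist z (ρ₂ 0) with hm
    have hm0 : 0 ≤ m := by
      have := dist_nonneg (x := z) (y := x)
      have := dist_nonneg (x := z) (y := ρ₁ 0)
      have := dist_nonneg (x := z) (y := ρ₂ 0)
      linarith
    -- distances to far points
    have hfar1 : r ≤ dist x (ρ₁ m) := by
      have t1 : dist (ρ₁ 0) (ρ₁ m) = m := by rw [ray_dist h₁ le_rfl hm0]; ring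
      have t2 := dist_triangle (ρ₁ 0) z (ρ₁ m)
      have t3 := dist_triangle z x (ρ₁ m)
      have c1 : dist (ρ₁ 0) z = dist z (ρ₁ 0) := dist_comm _ _
      have c2 := dist_nonneg (x := z) (y := ρ₂ 0)
      linarith
    have hfar2 : r ≤ dist x (ρ₂ m) := by
      have t1 : dist (ρ₂ 0) (ρ₂ m) = m := by rw [ray_dist h₂ le_rfl hm0]; ring
      have t2 := dist_triangle (ρ₂ 0) z (ρ₂ m)
      have t3 := dist_triangle z x (ρ₂ m)
      have c1 : dist (ρ₂ 0) z = dist z (ρ₂ 0) := dist_comm _ _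
      have t4 := dist_triangle z (ρ₂ 0) (ρ₂ m)
      have c2 := dist_nonneg (x := z) (y := ρ₁ 0)
      linarith
    have hfarγ : r ≤ dist x (γ n) := by
      have t1 : dist (γ s₀) (γ n) = n - s₀ := ray_dist hγray hs₀0 (by linarith)
      have t2 := dist_triangle (γ s₀) x (γ n)
      have c1 : dist (γ s₀) x = dist x (γ s₀) := dist_comm _ _
      linarith
    -- triangle T1
    obtain ⟨g₂, hg₂⟩ := hgeo (γ n) (ρ₁ m)
    obtain ⟨g₃, hg₃⟩ := hgeo (ρ₁ m) z
    have hseg₁ : IsGeodesicSegWrt (distFun X) γ z (γ n) := by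
      have := ray_restrict hγray hn0
      rwa [hγ0] at this
    obtain ⟨B1, -, -⟩ := hhyp z (γ n) (ρ₁ m) γ g₂ g₃ hseg₁ hg₂ hg₃
    have hdzn : dist z (γ n) = n := by
      rw [← hγ0, ray_dist hγray le_rfl hn0]; ring
    have hpmem : γ s₀ ∈ segImageWrt (distFun X) γ z (γ n) := by
      apply seg_mem_image
      rw [hdzn]; exact ⟨hs₀0, by linarith⟩
    obtain ⟨q, hq, hdq⟩ := B1 (γ s₀) hpmem
    replace hdq : dist (γ s₀) q ≤ δ := hdq
    rcases hq with hq | hq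
    · -- q on [γ n, ρ₁ m] : done
      obtain ⟨τ, hτ, rfl⟩ := hq
      refine ⟨γ n, ρ₁ m, g₂, τ, hg₂, hτ, ?_, hfarγ, hfar1⟩
      have := dist_triangle x (γ s₀) (g₂ τ)
      linarith
    · -- q on [ρ₁ m, z]
      obtain ⟨τ, hτ, rfl⟩ := hq
      replace hτ : τ ∈ Icc 0 (dist (ρ₁ m) z) := hτ
      -- triangle T2
      obtain ⟨g₄, hg₄⟩ := hgeo z (ρ₂ m)
      obtain ⟨g₅, hg₅⟩ := hgeo (ρ₂ m) (ρ₁ m)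
      obtain ⟨B1', -, -⟩ := hhyp (ρ₁ m) z (ρ₂ m) g₃ g₄ g₅ hg₃ hg₄ hg₅
      obtain ⟨r', hr', hdr'⟩ := B1' (g₃ τ) ⟨τ, hτ, rfl⟩
      replace hdr' : dist (g₃ τ) r' ≤ δ := hdr'
      rcases hr' with hr' | hr'
      swap
      · -- r' on [ρ₂ m, ρ₁ m] : done
        obtain ⟨β, hβ, rfl⟩ := hr'
        refine ⟨ρ₂ m, ρ₁ m, g₅, β, hg₅, hβ, ?_, hfar2, hfar1⟩
        have t1 := dist_triangle x (γ s₀) (g₃ τ)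
        have t2 := dist_triangle x (g₃ τ) (g₅ β)
        linarith
      · -- r' on [z, ρ₂ m] : x is close to z, use near_geodesic
        obtain ⟨β, hβ, rfl⟩ := hr'
        replace hβ : β ∈ Icc 0 (dist z (ρ₂ m)) := hβ
        obtain ⟨ht1, ht2⟩ := seg_param_dist hg₃ hτ  -- dist (ρ₁ m) (g₃ τ) = τ, dist (g₃ τ) z = dist (ρ₁ m) z - τ
        obtain ⟨hb1, hb2⟩ := seg_param_dist hg₄ hβ  -- dist z (g₄ β) = β, dist (g₄ β) (ρ₂ m) = dist z (ρ₂ m) - β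
        have hds₀ : dist z (γ s₀) = s₀ := by rw [← hγ0, ray_dist hγray le_rfl hs₀0]; ring
        set dzq := dist z (g₃ τ) with hdzq
        have hq1 : s₀ - δ ≤ dzq := by
          have := dist_triangle z (γ s₀) (g₃ τ)
          have t2 := dist_triangle z (g₃ τ) (γ s₀)
          have c1 : dist (g₃ τ) (γ s₀) = dist (γ s₀) (g₃ τ) := dist_comm _ _
          linarith
        have hβlo : dzq - δ ≤ β := by
          have := dist_triangle z (g₄ β) (g₃ τ)
          have c1 : dist (g₄ β) (g₃ τ) = dist (g₃ τ) (g₄ β) := dist_comm _ _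
          rw [← hb1]; linarith
        have hτval : τ = dist z (ρ₁ m) - dzq := by
          have c1 : dist (g₃ τ) z = dist z (g₃ τ) := dist_comm _ _
          have c2 : dist (ρ₁ m) z = dist z (ρ₁ m) := dist_comm _ _
          linarith
        have hgpbound : dist z (ρ₁ m) + dist z (ρ₂ m) - dist (ρ₁ m) (ρ₂ m) ≥ 2 * dzq - 2 * δ := by
          have t1 := dist_triangle4 (ρ₁ m) (g₃ τ) (g₄ β) (ρ₂ m)
          linarith
        have hgp := hPz z m hm0
        have hdzqle : dzq ≤ Pz + δ := by linarith
        have hs₀le : s₀ ≤ Pz + 2 * δ := by linarith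
        have hdxz : dist x z ≤ K + 1 + Pz + 2 * δ := by
          have := dist_triangle x (γ s₀) z
          have c1 : dist (γ s₀) z = dist z (γ s₀) := dist_comm _ _
          linarith
        obtain ⟨g₆, hg₆⟩ := hgeo (ρ₁ m) (ρ₂ m)
        obtain ⟨τ'', hτ'', hτd⟩ := near_geodesic hδ hgeo hhyp z (ρ₁ m) (ρ₂ m) hg₆
        refine ⟨ρ₁ m, ρ₂ m, g₆, τ'', hg₆, hτ'', ?_, hfar1, hfar2⟩
        have := dist_triangle x z (g₆ τ'')
        linarith
  
end S1

section Mains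
variable {X : Type*} [MetricSpace X] [ProperSpace X]

theorem tendsto_snd_nn : Tendsto (fun i : ℕ × ℕ => ((i.2 : ℕ) : ℝ)) (atTop : Filter (ℕ × ℕ)) atTop := by
  have h1 : Tendsto (Prod.snd : ℕ × ℕ → ℕ) (atTop : Filter (ℕ × ℕ)) atTop := by
    rw [← prod_atTop_atTop_eq]; exact tendsto_snd
  exact tendsto_natCast_atTop_atTop.comp h1

theorem tendsto_fst_nn : Tendsto (fun i : ℕ × ℕ => ((i.1 : ℕ) : ℝ)) (atTop : Filter (ℕ × ℕ)) atTop := by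
  have h1 : Tendsto (Prod.fst : ℕ × ℕ → ℕ) (atTop : Filter (ℕ × ℕ)) atTop := by
    rw [← prod_atTop_atTop_eq]; exact tendsto_fst
  exact tendsto_natCast_atTop_atTop.comp h1

/-- Construction of a geodesic line asymptotic to `ρ` passing near `x`. -/
theorem line_toward_ray {δ : ℝ} (hδ : 0 ≤ δ) (hgeo : GeodesicSpaceWrt (distFun X))
    (hhyp : DeltaHyperbolicWrt (distFun X) δ) {ρ : ℝ → X} (hρ : IsGeodesicRayWrt (distFun X) ρ)
    (x : X) {C' : ℝ} (hC' : 0 ≤ C') {c : ℕ → X} (hfc : ∀ j : ℕ, (j : ℝ) ≤ dist x (c j))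
    {h : ℕ × ℕ → ℝ → X}
    (hh : ∀ i : ℕ × ℕ, IsGeodesicSegWrt (distFun X) (h i) (ρ ((i.2 : ℕ) : ℝ)) (c i.1))
    (U₂ : Ultrafilter (ℕ × ℕ)) (hU₂ : (U₂ : Filter (ℕ × ℕ)) ≤ atTop)
    (hP : ∀ᶠ i in U₂, ∃ u ∈ Icc 0 (dist (ρ ((i.2 : ℕ) : ℝ)) (c i.1)), dist x (h i u) ≤ C') :
    ∃ γ : ℝ → X, IsGeodesicLineWrt (distFun X) γ ∧
      RayEquivWrt (distFun X) (fun t => γ (-t)) ρ ∧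
      infDistWrt (distFun X) x (range γ) ≤ C' := by
  set m : ℕ × ℕ → ℝ := fun i => ((i.2 : ℕ) : ℝ) with hmdef
  set L : ℕ × ℕ → ℝ := fun i => dist (ρ (m i)) (c i.1) with hLdef
  have hm0 : ∀ i, 0 ≤ m i := fun i => Nat.cast_nonneg _
  have hmT : Tendsto m U₂ atTop := tendsto_snd_nn.mono_left hU₂
  have hjT : Tendsto (fun i : ℕ × ℕ => ((i.1 : ℕ) : ℝ)) U₂ atTop := tendsto_fst_nn.mono_left hU₂
  set dx := dist (ρ 0) x with hdxdef
  have hdx0 : 0 ≤ dx := dist_nonneg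
  set B := dx + C' + δ with hBdef
  have hB0 : 0 ≤ B := by linarith
  -- the marked parameter
  set u : ℕ × ℕ → ℝ := fun i =>
    if hex : ∃ u' ∈ Icc 0 (L i), dist x (h i u') ≤ C' then hex.choose else 0 with hudef
  have hugood : ∀ᶠ i in U₂, u i ∈ Icc 0 (L i) ∧ dist x (h i (u i)) ≤ C' := by
    filter_upwards [hP] with i hi
    rw [hudef]; simp only [dif_pos (show ∃ u' ∈ Icc 0 (L i), dist x (h i u') ≤ C' from hi)]
    exact ⟨hi.choose_spec.1, hi.choose_spec.2⟩
  -- basic distance facts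
  have hρm : ∀ i, dist (ρ 0) (ρ (m i)) = m i := fun i => by
    rw [ray_dist hρ le_rfl (hm0 i)]; ring
  have hum : ∀ᶠ i in U₂, |u i - m i| ≤ B - δ ∧ dist (ρ (m i)) x - C' ≤ u i ∧
      dist x (c i.1) - C' ≤ L i - u i := by
    filter_upwards [hugood] with i hi
    obtain ⟨hp1, hp2⟩ := seg_param_dist (hh i) hi.1
    -- hp1 : dist (ρ (m i)) (h i (u i)) = u i, hp2 : dist (h i (u i)) (c i.1) = L i - u i
    have t1 := dist_triangle (ρ (m i)) x (h i (u i))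
    have t2 := dist_triangle (ρ (m i)) (h i (u i)) x
    have t3 := dist_triangle (ρ 0) (ρ (m i)) x
    have t4 := dist_triangle (ρ (m i)) (ρ 0) x
    have t7 := dist_triangle (ρ 0) x (ρ (m i))
    have c4 : dist x (ρ (m i)) = dist (ρ (m i)) x := dist_comm _ _
    have t5 := dist_triangle x (h i (u i)) (c i.1)
    have t6 := dist_triangle (h i (u i)) x (c i.1)
    have c1 : dist x (h i (u i)) = dist (h i (u i)) x := dist_comm _ _
    have c2 : dist (ρ (m i)) (ρ 0) = dist (ρ 0) (ρ (m i)) := dist_comm _ _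
    have c3 : dist (ρ (m i)) x = dist x (ρ (m i)) := dist_comm _ _
    constructor
    · rw [abs_le]
      constructor <;> [skip; skip] <;> · rw [hBdef, hdxdef]; linarith [hρm i, hi.2]
    constructor
    · linarith [hi.2]
    · linarith [hi.2]
  have hleft : Tendsto u U₂ atTop := by
    apply tendsto_atTop_mono' (U₂ : Filter (ℕ × ℕ))
      (f₁ := fun i => m i - (B - δ))
    · filter_upwards [hum] with i hi
      have := abs_le.1 hi.1
      linarith [this.1]
    · exact tendsto_atTop_add_const_right _ _ hmT
  have hright : Tendsto (fun i => L i - u i) U₂ atTop := by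
    apply tendsto_atTop_mono' (U₂ : Filter (ℕ × ℕ)) (f₁ := fun i => ((i.1 : ℕ) : ℝ) - C')
    · filter_upwards [hum] with i hi
      have := hfc i.1
      linarith [hi.2.2]
    · exact tendsto_atTop_add_const_right _ _ hjT
  obtain ⟨γ, hγline, hγ0, hγconv⟩ := limit_line U₂ hh (hugood.mono fun i hi => hi.1)
    (hugood.mono fun i hi => hi.2) hleft hright
  have hγline' : ∀ s t : ℝ, dist (γ s) (γ t) = |s - t| := hγline
  refine ⟨γ, hγline, ?_, le_trans (infDistWrt_le (mem_range_self 0)) hγ0⟩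
  -- the ray-equivalence
  refine ⟨2 * δ + B + (2 * (2 * B + δ) + C' + dx), fun t ht => ?_⟩
  replace ht : (0:ℝ) ≤ t := ht
  show dist (γ (-t)) (ρ t) ≤ _
  rcases le_or_gt t (2 * B + δ) with hcase | hcase
  · -- small t : crude bound
    have b1 : dist (γ (-t)) (γ 0) = t := by
      rw [hγline', abs_of_nonpos (by linarith)]; ring
    have b2 : dist (ρ 0) (ρ t) = t := by rw [ray_dist hρ le_rfl ht]; ring
    have t1 := dist_triangle4 (γ (-t)) (γ 0) (ρ 0) (ρ t)
    have t2 := dist_triangle (γ 0) x (ρ 0)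
    have c1 : dist (γ 0) x = dist x (γ 0) := dist_comm _ _
    have c2 : dist x (ρ 0) = dist (ρ 0) x := dist_comm _ _
    have := dist_nonneg (x := γ (-t)) (y := ρ t)
    linarith [hγ0]
  · -- large t : use the thin triangle along the segments
    have hev : ∀ᶠ i in U₂, dist (h i (clp (L i) (u i + -t))) (ρ t) ≤ 2 * δ + B := by
      filter_upwards [hugood, hum, hleft.eventually_ge_atTop t,
        hmT.eventually_ge_atTop 0] with i hi hbi hut hm0'
      have huI : u i ∈ Icc 0 (L i) := hi.1
      have hutI : u i - t ∈ Icc 0 (L i) := ⟨by linarith, by linarith [huI.2]⟩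
      have hclp : clp (L i) (u i + -t) = u i - t := by
        rw [show u i + -t = u i - t by ring]; exact clp_of_mem hutI
      rw [hclp]
      set w := h i (u i - t) with hwdef
      obtain ⟨hw1, hw2⟩ := seg_param_dist (hh i) hutI
      -- hw1 : dist (ρ (m i)) w = u i - t,  hw2 : dist w (c i.1) = L i - (u i - t)
      -- thin triangle (ρ 0, ρ (m i), c i.1)
      have hseg₁ : IsGeodesicSegWrt (distFun X) ρ (ρ 0) (ρ (m i)) := ray_restrict hρ (hm0 i)
      obtain ⟨g₆, hg₆⟩ := hgeo (c i.1) (ρ 0)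
      obtain ⟨-, B2, -⟩ := hhyp (ρ 0) (ρ (m i)) (c i.1) ρ (h i) g₆ hseg₁ (hh i) hg₆
      have hwmem : w ∈ segImageWrt (distFun X) (h i) (ρ (m i)) (c i.1) :=
        seg_mem_image hutI
      obtain ⟨q, hq, hdq⟩ := B2 w hwmem
      replace hdq : dist w q ≤ δ := hdq
      rcases hq with hq | hq
      · -- q = ρ s : the good case
        obtain ⟨s, hs, rfl⟩ := hq
        replace hs : s ∈ Icc 0 (dist (ρ 0) (ρ (m i))) := hs
        rw [hρm i] at hs
        have e2 : dist (ρ s) (ρ (m i)) = m i - s := ray_dist hρ hs.1 hs.2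
        have e3 : dist (ρ s) (ρ t) = |s - t| := by
          have := hρ s hs.1 t ht
          exact this
        have habs : |(m i - s) - (u i - t)| ≤ δ := by
          rw [abs_le]
          have t1 := dist_triangle (ρ (m i)) w (ρ s)
          have t2 := dist_triangle (ρ (m i)) (ρ s) w
          have c1 : dist w (ρ s) = dist (ρ s) w := dist_comm _ _
          have c2 : dist (ρ (m i)) (ρ s) = dist (ρ s) (ρ (m i)) := dist_comm _ _
          have c3 : dist (ρ s) w = dist w (ρ s) := dist_comm _ _
          constructor <;> linarith
        have hst : |s - t| ≤ (B - δ) + δ := by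
          have hum1 := abs_le.1 hbi.1
          have h1 := abs_le.1 habs
          rw [abs_le]
          constructor <;> linarith [hum1.1, hum1.2, h1.1, h1.2]
        have hst' := abs_le.1 hst
        have tt := dist_triangle w (ρ s) (ρ t)
        rw [e3] at tt
        linarith [hst'.1, hst'.2, abs_nonneg (s - t)]
      · -- q on [c i.1, ρ 0] : impossible for large t
        exfalso
        obtain ⟨β, hβ, rfl⟩ := hq
        replace hβ : β ∈ Icc 0 (dist (c i.1) (ρ 0)) := hβ
        obtain ⟨hq1, hq2⟩ := seg_param_dist hg₆ hβ
        -- hq1 : dist (c i.1) (g₆ β) = β, hq2 : dist (g₆ β) (ρ 0) = dist (c i.1) (ρ 0) - β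
        set D := dist (c i.1) (ρ 0) with hDdef
        have f1 : L i - (u i - t) ≤ β + δ := by
          have t1 := dist_triangle (c i.1) (g₆ β) w
          have c1 : dist (g₆ β) w = dist w (g₆ β) := dist_comm _ _
          have c2 : dist (c i.1) w = dist w (c i.1) := dist_comm _ _
          linarith
        have f2 : m i - (u i - t) ≤ δ + (D - β) := by
          have tA := dist_triangle (ρ 0) w (ρ (m i))
          have cA : dist w (ρ (m i)) = dist (ρ (m i)) w := dist_comm _ _
          have tB := dist_triangle (ρ 0) (g₆ β) w
          have cB : dist (g₆ β) w = dist w (g₆ β) := dist_comm _ _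
          have cC : dist (ρ 0) (g₆ β) = dist (g₆ β) (ρ 0) := dist_comm _ _
          have cD : dist (ρ 0) (ρ (m i)) = m i := hρm i
          linarith
        have f3 : D ≤ dist (c i.1) x + dx := by
          have := dist_triangle (c i.1) x (ρ 0)
          have c1 : dist x (ρ 0) = dx := dist_comm _ _
          linarith
        have f4 : dist x (c i.1) - C' ≤ L i - u i := hbi.2.2
        have f5 : u i - m i ≤ B - δ := (abs_le.1 hbi.1).2
        have c6 : dist (c i.1) x = dist x (c i.1) := dist_comm _ _
        -- combine : 2t ≤ 2B + δ, contradiction with hcase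
        linarith
    have hconv := (hγconv (-t)).dist (tendsto_const_nhds (x := ρ t))
    exact le_trans (le_of_tendsto hconv hev) (by linarith [dist_nonneg (x := x) (y := ρ 0)])


/-- Goal A : rough starlikeness from every point. -/
theorem starlike_point {δ C : ℝ} (hδ : 0 ≤ δ) (hgeo : GeodesicSpaceWrt (distFun X))
    (hhyp : DeltaHyperbolicWrt (distFun X) δ) (hC : 0 ≤ C)
    (hS1 : ∀ x : X, ∀ r : ℝ, 0 ≤ r → ∃ (a b : X) (g : ℝ → X) (t : ℝ),
      IsGeodesicSegWrt (distFun X) g a b ∧ t ∈ Icc 0 (dist a b) ∧ dist x (g t) ≤ C ∧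
      r ≤ dist x a ∧ r ≤ dist x b)
    (w : X) : RoughStarlikeFromPointWrt (distFun X) (C + δ) w := by
  intro x
  choose a b g t hseg hmem hclose hfa hfb using fun j : ℕ => hS1 x j (Nat.cast_nonneg j)
  obtain ⟨U, hU⟩ : ∃ U : Ultrafilter ℕ, (U : Filter ℕ) ≤ atTop :=
    ⟨Ultrafilter.of atTop, Ultrafilter.of_le _⟩
  set Ga : ℕ → ℝ → X := fun j => (hgeo w (a j)).choose with hGadef
  set Gb : ℕ → ℝ → X := fun j => (hgeo w (b j)).choose with hGbdef
  have hGa : ∀ j, IsGeodesicSegWrt (distFun X) (Ga j) w (a j) := fun j => (hgeo w (a j)).choose_spec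
  have hGb : ∀ j, IsGeodesicSegWrt (distFun X) (Gb j) w (b j) := fun j => (hgeo w (b j)).choose_spec
  have hP : ∀ j : ℕ, (∃ s ∈ Icc 0 (dist w (a j)), dist x (Ga j s) ≤ C + δ) ∨
      (∃ s ∈ Icc 0 (dist w (b j)), dist x (Gb j s) ≤ C + δ) := by
    intro j
    have hrev := seg_reverse (hGb j)
    obtain ⟨-, B2, -⟩ := hhyp w (a j) (b j) (Ga j) (g j)
      (fun s => Gb j (dist w (b j) - s)) (hGa j) (hseg j) hrev
    obtain ⟨q, hq, hdq⟩ := B2 (g j (t j)) (seg_mem_image (hmem j))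
    replace hdq : dist (g j (t j)) q ≤ δ := hdq
    rcases hq with hq | hq
    · obtain ⟨s, hs, rfl⟩ := hq
      refine Or.inl ⟨s, hs, ?_⟩
      have := dist_triangle x (g j (t j)) (Ga j s)
      linarith [hclose j]
    · have hq' := seg_reverse_image hq
      obtain ⟨s, hs, rfl⟩ := hq'
      refine Or.inr ⟨s, hs, ?_⟩
      have := dist_triangle x (g j (t j)) (Gb j s)
      linarith [hclose j]
  have hlen : ∀ (cc : ℕ → X), (∀ j : ℕ, (j:ℝ) ≤ dist x (cc j)) →
      Tendsto (fun j => dist w (cc j)) (U : Filter ℕ) atTop := by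
    intro cc hcc
    apply tendsto_atTop_mono' (U : Filter ℕ) (f₁ := fun j : ℕ => (j:ℝ) - dist x w)
    · refine Eventually.of_forall fun j => ?_
      show (j:ℝ) - dist x w ≤ dist w (cc j)
      have := dist_triangle x w (cc j)
      linarith [hcc j]
    · exact (tendsto_atTop_add_const_right _ _ tendsto_natCast_atTop_atTop).mono_left hU
  have hfin : ∀ (cc : ℕ → X) (Gc : ℕ → ℝ → X), (∀ j : ℕ, (j:ℝ) ≤ dist x (cc j)) →
      (∀ j, IsGeodesicSegWrt (distFun X) (Gc j) w (cc j)) →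
      (∀ᶠ j in U, ∃ s ∈ Icc 0 (dist w (cc j)), dist x (Gc j s) ≤ C + δ) →
      ∃ γ : ℝ → X, IsGeodesicRayWrt (distFun X) γ ∧ γ 0 = w ∧
        infDistWrt (distFun X) x (γ '' Ici 0) ≤ C + δ := by
    intro cc Gc hcc hGc hev
    obtain ⟨γ, hray, hγ0, s', hs', hds'⟩ := limit_ray U hGc (hlen cc hcc) hev
    exact ⟨γ, hray, hγ0, le_trans (infDistWrt_le ⟨s', hs', rfl⟩) hds'⟩
  rcases Ultrafilter.em U {j | ∃ s ∈ Icc 0 (dist w (a j)), dist x (Ga j s) ≤ C + δ} with hA | hA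
  · exact hfin a Ga hfa hGa hA
  · refine hfin b Gb hfb hGb (U.mem_of_superset hA ?_)
    intro j hj
    rcases hP j with h1 | h2
    · exact absurd h1 hj
    · exact h2

/-- Goal B : rough starlikeness from every boundary point. -/
theorem starlike_ray {δ C : ℝ} (hδ : 0 ≤ δ) (hgeo : GeodesicSpaceWrt (distFun X))
    (hhyp : DeltaHyperbolicWrt (distFun X) δ) (hC : 0 ≤ C)
    (hS1 : ∀ x : X, ∀ r : ℝ, 0 ≤ r → ∃ (a b : X) (g : ℝ → X) (t : ℝ),
      IsGeodesicSegWrt (distFun X) g a b ∧ t ∈ Icc 0 (dist a b) ∧ dist x (g t) ≤ C ∧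
      r ≤ dist x a ∧ r ≤ dist x b)
    {ρ : ℝ → X} (hρ : IsGeodesicRayWrt (distFun X) ρ) :
    RoughStarlikeFromRayWrt (distFun X) (C + δ) ρ := by
  intro x
  choose a b g t hseg hmem hclose hfa hfb using fun j : ℕ => hS1 x j (Nat.cast_nonneg j)
  obtain ⟨U₂, hU₂⟩ : ∃ U : Ultrafilter (ℕ × ℕ), (U : Filter (ℕ × ℕ)) ≤ atTop :=
    ⟨Ultrafilter.of atTop, Ultrafilter.of_le _⟩
  set Ga : ℕ × ℕ → ℝ → X := fun i => (hgeo (ρ ((i.2 : ℕ) : ℝ)) (a i.1)).choose with hGadef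
  set Gb : ℕ × ℕ → ℝ → X := fun i => (hgeo (ρ ((i.2 : ℕ) : ℝ)) (b i.1)).choose with hGbdef
  have hGa : ∀ i, IsGeodesicSegWrt (distFun X) (Ga i) (ρ ((i.2 : ℕ) : ℝ)) (a i.1) :=
    fun i => (hgeo _ _).choose_spec
  have hGb : ∀ i, IsGeodesicSegWrt (distFun X) (Gb i) (ρ ((i.2 : ℕ) : ℝ)) (b i.1) :=
    fun i => (hgeo _ _).choose_spec
  have hP : ∀ i : ℕ × ℕ,
      (∃ u ∈ Icc 0 (dist (ρ ((i.2 : ℕ) : ℝ)) (a i.1)), dist x (Ga i u) ≤ C + δ) ∨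
      (∃ u ∈ Icc 0 (dist (ρ ((i.2 : ℕ) : ℝ)) (b i.1)), dist x (Gb i u) ≤ C + δ) := by
    intro i
    have hrev := seg_reverse (hGb i)
    obtain ⟨B1, -, -⟩ := hhyp (a i.1) (b i.1) (ρ ((i.2 : ℕ) : ℝ)) (g i.1)
      (fun s => Gb i (dist (ρ ((i.2 : ℕ) : ℝ)) (b i.1) - s)) (Ga i) (hseg i.1) hrev (hGa i)
    obtain ⟨q, hq, hdq⟩ := B1 (g i.1 (t i.1)) (seg_mem_image (hmem i.1))
    replace hdq : dist (g i.1 (t i.1)) q ≤ δ := hdq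
    rcases hq with hq | hq
    · have hq' := seg_reverse_image hq
      obtain ⟨s, hs, rfl⟩ := hq'
      refine Or.inr ⟨s, hs, ?_⟩
      have := dist_triangle x (g i.1 (t i.1)) (Gb i s)
      linarith [hclose i.1]
    · obtain ⟨s, hs, rfl⟩ := hq
      refine Or.inl ⟨s, hs, ?_⟩
      have := dist_triangle x (g i.1 (t i.1)) (Ga i s)
      linarith [hclose i.1]
  rcases Ultrafilter.em U₂
      {i | ∃ u ∈ Icc 0 (dist (ρ ((i.2 : ℕ) : ℝ)) (a i.1)), dist x (Ga i u) ≤ C + δ} with hA | hA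
  · exact line_toward_ray hδ hgeo hhyp hρ x (by linarith) hfa hGa U₂ hU₂ hA
  · refine line_toward_ray hδ hgeo hhyp hρ x (by linarith) hfb hGb U₂ hU₂
      (U₂.mem_of_superset hA ?_)
    intro i hi
    rcases hP i with h1 | h2
    · exact absurd h1 hi
    · exact h2

end Mains

end Statement5Aux

/-- If a proper geodesic `δ`-hyperbolic space `X` whose Gromov boundary
contains at least two points is `K`-roughly starlike from some point of `X ∪ ∂X`, then
there is `K' ≥ 0` such that `X` is `K'`-roughly starlike from all points of `X ∪ ∂X`. -/
theorem statement5 {X : Type*} [MetricSpace X] [ProperSpace X] (δ K : ℝ)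
    (hδ : 0 ≤ δ) (hK : 0 ≤ K)
    (hgeo : GeodesicSpaceWrt (distFun X)) (hhyp : DeltaHyperbolicWrt (distFun X) δ)
    (htwo : ∃ ρ₁ ρ₂ : ℝ → X, IsGeodesicRayWrt (distFun X) ρ₁ ∧
      IsGeodesicRayWrt (distFun X) ρ₂ ∧ ¬ RayEquivWrt (distFun X) ρ₁ ρ₂)
    (hstar : (∃ z : X, RoughStarlikeFromPointWrt (distFun X) K z) ∨
      (∃ ρ : ℝ → X, IsGeodesicRayWrt (distFun X) ρ ∧ RoughStarlikeFromRayWrt (distFun X) K ρ)) :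
    ∃ K' : ℝ, 0 ≤ K' ∧
      (∀ z : X, RoughStarlikeFromPointWrt (distFun X) K' z) ∧
      ∀ ρ : ℝ → X, IsGeodesicRayWrt (distFun X) ρ → RoughStarlikeFromRayWrt (distFun X) K' ρ := by
  obtain ⟨C, hC0, hS1⟩ := far_segments hδ hK hgeo hhyp htwo hstar
  exact ⟨C + δ, by linarith, fun z => starlike_point hδ hgeo hhyp hC0 hS1 z,
    fun ρ hρ => starlike_ray hδ hgeo hhyp hC0 hS1 hρ⟩

end Paper

end
end

section
/- Let X be a proper geodesic δ-hyperbolic space whose Gromov boundary ∂X contains at least two points. If X is K-roughly starlike from a point ω ∈ ∂X, then X is (K + 10δ)-roughly starlike from every point x ∈ X ∪ ∂X. -/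
open Metric Set Filter Topology
open scoped ENNReal Classical

noncomputable section

namespace Paper

variable {X Y : Type*}

/-! ### Auxiliary lemmas for Statement 7 -/

noncomputable def s7UU : Ultrafilter ℕ := Ultrafilter.of atTop

lemma s7UU_le : (s7UU : Filter ℕ) ≤ atTop := Ultrafilter.of_le _

lemma s7_ulim_exists {α : Type*} [TopologicalSpace α] {K : Set α} (hK : IsCompact K)
    {u : ℕ → α} (hu : ∀ n, u n ∈ K) : ∃ x, Tendsto u (s7UU : Filter ℕ) (𝓝 x) := by
  obtain ⟨a, -, h⟩ := hK.ultrafilter_le_nhds (s7UU.map u)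
    (by rw [Ultrafilter.coe_map]; exact le_principal_iff.2 (Filter.mem_map.2 (Filter.univ_mem' hu)))
  exact ⟨a, h⟩

lemma s7_clamp_lip (L a b : ℝ) : |max 0 (min a L) - max 0 (min b L)| ≤ |a - b| := by
  have h1 : |max 0 (min a L) - max 0 (min b L)| ≤ |min a L - min b L| := by
    simpa [max_comm] using abs_max_sub_max_le_abs (min a L) (min b L) 0
  refine h1.trans ?_
  have := abs_min_sub_min_le_max a L b L
  simpa using this

lemma s7_dist_eq_of_ulim {α : Type*} [MetricSpace α] {u v : ℕ → α} {a b : α} {d : ℝ}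
    (hu : Tendsto u (s7UU : Filter ℕ) (𝓝 a)) (hv : Tendsto v (s7UU : Filter ℕ) (𝓝 b))
    (h : ∀ᶠ n in atTop, dist (u n) (v n) = d) : dist a b = d := by
  haveI : (s7UU : Filter ℕ).NeBot := Ultrafilter.neBot _
  refine tendsto_nhds_unique (hu.dist hv) ?_
  exact Tendsto.congr' (by filter_upwards [s7UU_le h] with n hn using hn.symm) tendsto_const_nhds

section S7Construction

variable {X : Type*} [MetricSpace X] [ProperSpace X]

lemma s7_gexists (σ : ℕ → ℝ → X) (p : X) (C : ℝ)
    (h : ∀ n t, dist (σ n t) p ≤ |t| + C) :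
    ∃ g : ℝ → X, ∀ t, Tendsto (fun n => σ n t) (s7UU : Filter ℕ) (𝓝 (g t)) := by
  have H : ∀ t : ℝ, ∃ x, Tendsto (fun n => σ n t) (s7UU : Filter ℕ) (𝓝 x) := fun t =>
    s7_ulim_exists (isCompact_closedBall p (|t| + C)) (fun n => by
      simpa [mem_closedBall] using h n t)
  exact ⟨fun t => (H t).choose, fun t => (H t).choose_spec⟩

/-- Construction of a geodesic ray as ultralimit of geodesic segments from `z`. -/
lemma s7_ray_limit {δ : ℝ} (σ : ℕ → ℝ → X) (L s : ℕ → ℝ) (z p : X)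
    (h0 : ∀ n, σ n 0 = z)
    (hiso : ∀ n, ∀ a ∈ Icc 0 (L n), ∀ b ∈ Icc 0 (L n), dist (σ n a) (σ n b) = |a - b|)
    (hL : Tendsto L atTop atTop)
    (hs : ∀ n, s n ∈ Icc 0 (L n))
    (hsp : ∀ n, dist p (σ n (s n)) ≤ δ) :
    ∃ g : ℝ → X, (∀ a ∈ Ici (0:ℝ), ∀ b ∈ Ici (0:ℝ), dist (g a) (g b) = |a - b|) ∧
      g 0 = z ∧ ∃ t ∈ Ici (0:ℝ), dist p (g t) ≤ δ := by
  haveI : (s7UU : Filter ℕ).NeBot := Ultrafilter.neBot _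
  have hL0 : ∀ n, 0 ≤ L n := fun n => le_trans (hs n).1 (hs n).2
  set σ' : ℕ → ℝ → X := fun n t => σ n (max 0 (min t (L n))) with hσ'
  have hmem : ∀ n t, max 0 (min t (L n)) ∈ Icc 0 (L n) := fun n t =>
    ⟨le_max_left _ _, max_le (hL0 n) (min_le_right _ _)⟩
  have hlip : ∀ n a b, dist (σ' n a) (σ' n b) ≤ |a - b| := fun n a b => by
    rw [hiso n _ (hmem n a) _ (hmem n b)]; exact s7_clamp_lip (L n) a b
  have hid : ∀ n, ∀ t ∈ Icc 0 (L n), σ' n t = σ n t := fun n t ht => by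
    simp [hσ', min_eq_left ht.2, max_eq_right ht.1]
  have h0' : ∀ n, σ' n 0 = z := fun n => by rw [hid n 0 ⟨le_refl _, hL0 n⟩]; exact h0 n
  have hball : ∀ n t, dist (σ' n t) z ≤ |t| + 0 := fun n t => by
    have := hlip n t 0
    rw [h0' n] at this
    simpa using this.trans (by simp [abs_sub_abs_le_abs_sub] : |t - 0| ≤ |t|)
  obtain ⟨g, hg⟩ := s7_gexists σ' z 0 hball
  have hray : ∀ a ∈ Ici (0:ℝ), ∀ b ∈ Ici (0:ℝ), dist (g a) (g b) = |a - b| := by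
    intro a ha b hb
    refine s7_dist_eq_of_ulim (hg a) (hg b) ?_
    filter_upwards [hL.eventually_ge_atTop (max a b)] with n hn
    rw [hid n a ⟨ha, le_trans (le_max_left a b) hn⟩, hid n b ⟨hb, le_trans (le_max_right a b) hn⟩]
    exact hiso n a ⟨ha, le_trans (le_max_left a b) hn⟩ b ⟨hb, le_trans (le_max_right a b) hn⟩
  have hg0 : g 0 = z := by
    refine tendsto_nhds_unique (hg 0) ?_
    have : (fun n => σ' n 0) = fun _ : ℕ => z := funext h0'
    rw [this]
    exact tendsto_const_nhds
  have hsC : ∀ n, s n ∈ Icc (0:ℝ) (dist z p + δ) := by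
    intro n
    refine ⟨(hs n).1, ?_⟩
    have h1 : dist (σ n 0) (σ n (s n)) = |0 - s n| :=
      hiso n 0 ⟨le_refl _, hL0 n⟩ _ (hs n)
    have h2 : dist z (σ n (s n)) ≤ dist z p + δ :=
      (dist_triangle z p (σ n (s n))).trans (by linarith [hsp n])
    rw [h0 n] at h1
    rw [show |0 - s n| = s n by rw [abs_sub_comm]; simpa using abs_of_nonneg (hs n).1] at h1
    linarith [h1 ▸ h2]
  obtain ⟨t, ht⟩ := s7_ulim_exists isCompact_Icc hsC
  have ht0 : 0 ≤ t := ge_of_tendsto ht (Filter.Eventually.of_forall (fun n => (hs n).1))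
  refine ⟨g, hray, hg0, t, ht0, ?_⟩
  have key : ∀ n, dist p (g t) ≤ δ + |s n - t| + dist (σ' n t) (g t) := by
    intro n
    calc dist p (g t) ≤ dist p (σ n (s n)) + dist (σ n (s n)) (σ' n t) + dist (σ' n t) (g t) :=
          dist_triangle4 _ _ _ _
      _ ≤ δ + |s n - t| + dist (σ' n t) (g t) := by
          have : dist (σ n (s n)) (σ' n t) ≤ |s n - t| := by
            rw [← hid n (s n) (hs n)]; exact hlip n (s n) t
          linarith [hsp n]
  have hlim : Tendsto (fun n => δ + |s n - t| + dist (σ' n t) (g t)) (s7UU : Filter ℕ)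
      (𝓝 (δ + |t - t| + dist (g t) (g t))) :=
    Tendsto.add (tendsto_const_nhds.add ((ht.sub tendsto_const_nhds).abs))
      ((hg t).dist tendsto_const_nhds)
  simp only [sub_self, abs_zero, dist_self, add_zero] at hlim
  exact ge_of_tendsto hlim (Filter.Eventually.of_forall key)

/-- Construction of a geodesic line as ultralimit of reparametrized geodesic segments. -/
lemma s7_line_limit {δ : ℝ} (σ : ℕ → ℝ → X) (M s : ℕ → ℝ) (p : X)
    (hiso : ∀ n, ∀ a ∈ Icc 0 (M n), ∀ b ∈ Icc 0 (M n), dist (σ n a) (σ n b) = |a - b|)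
    (hs : ∀ n, s n ∈ Icc 0 (M n))
    (hsT : Tendsto s atTop atTop)
    (hMs : Tendsto (fun n => M n - s n) atTop atTop)
    (hsp : ∀ n, dist p (σ n (s n)) ≤ δ) :
    ∃ g : ℝ → X, (∀ a b : ℝ, dist (g a) (g b) = |a - b|) ∧
      ∀ (t : ℝ) (q : X) (c : ℝ), (∀ᶠ n in atTop, dist (σ n (s n + t)) q ≤ c) →
        dist (g t) q ≤ c := by
  haveI : (s7UU : Filter ℕ).NeBot := Ultrafilter.neBot _
  have hM0 : ∀ n, 0 ≤ M n := fun n => le_trans (hs n).1 (hs n).2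
  set τ : ℕ → ℝ → X := fun n t => σ n (max 0 (min (s n + t) (M n))) with hτ
  have hmem : ∀ n t, max 0 (min (s n + t) (M n)) ∈ Icc 0 (M n) := fun n t =>
    ⟨le_max_left _ _, max_le (hM0 n) (min_le_right _ _)⟩
  have hlip : ∀ n a b, dist (τ n a) (τ n b) ≤ |a - b| := fun n a b => by
    rw [hiso n _ (hmem n a) _ (hmem n b)]
    calc |max 0 (min (s n + a) (M n)) - max 0 (min (s n + b) (M n))| ≤ |(s n + a) - (s n + b)| :=
        s7_clamp_lip (M n) _ _
      _ = |a - b| := by ring_nf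
  have hid : ∀ n t, s n + t ∈ Icc 0 (M n) → τ n t = σ n (s n + t) := fun n t ht => by
    simp [hτ, min_eq_left ht.2, max_eq_right ht.1]
  have hev : ∀ t : ℝ, ∀ᶠ n in atTop, s n + t ∈ Icc 0 (M n) := by
    intro t
    filter_upwards [hsT.eventually_ge_atTop (-t), hMs.eventually_ge_atTop t] with n h1 h2
    exact ⟨by linarith, by linarith⟩
  have hball : ∀ n t, dist (τ n t) p ≤ |t| + δ := fun n t => by
    have h1 : dist (τ n t) (τ n 0) ≤ |t| := by simpa using hlip n t 0
    have h2 : τ n 0 = σ n (s n) := by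
      have := hid n 0 (by simpa using hs n); simpa using this
    rw [h2] at h1
    calc dist (τ n t) p ≤ dist (τ n t) (σ n (s n)) + dist (σ n (s n)) p := dist_triangle _ _ _
      _ ≤ |t| + δ := add_le_add h1 (dist_comm p _ ▸ hsp n)
  obtain ⟨g, hg⟩ := s7_gexists τ p δ hball
  refine ⟨g, ?_, ?_⟩
  · intro a b
    refine s7_dist_eq_of_ulim (hg a) (hg b) ?_
    filter_upwards [hev a, hev b] with n ha hb
    rw [hid n a ha, hid n b hb, hiso n _ ha _ hb]
    ring_nf
  · intro t q c h
    refine le_of_forall_pos_le_add (fun ε hε => ?_)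
    have h1 : ∀ᶠ n in (s7UU : Filter ℕ), dist (g t) (τ n t) < ε := by
      have h2 := (tendsto_const_nhds : Tendsto (fun _ : ℕ => g t) (s7UU : Filter ℕ)
        (𝓝 (g t))).dist (hg t)
      rw [dist_self] at h2
      exact h2.eventually (eventually_lt_nhds hε)
    have hA : ∀ᶠ n in (s7UU : Filter ℕ), s n + t ∈ Icc 0 (M n) := s7UU_le (hev t)
    have hB : ∀ᶠ n in (s7UU : Filter ℕ), dist (σ n (s n + t)) q ≤ c := s7UU_le h
    obtain ⟨n, hn1, hn2, hn3⟩ := (h1.and (hA.and hB)).exists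
    calc dist (g t) q ≤ dist (g t) (τ n t) + dist (τ n t) q := dist_triangle _ _ _
      _ ≤ ε + c := by rw [hid n t hn2] at hn1 ⊢; exact add_le_add hn1.le hn3
      _ = c + ε := add_comm _ _

lemma s7_exists_min_dist {γ : ℝ → X} (hγ : ∀ a b : ℝ, dist (γ a) (γ b) = |a - b|) (x : X) :
    ∃ t₀ : ℝ, ∀ t : ℝ, dist x (γ t₀) ≤ dist x (γ t) := by
  set f : ℝ → ℝ := fun t => dist x (γ t) with hf
  have hR : 0 ≤ f 0 := dist_nonneg
  set R := f 0 with hRdef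
  have hcont : Continuous f := by
    refine (LipschitzWith.of_dist_le_mul (K := 1) (fun a b => ?_)).continuous
    rw [NNReal.coe_one, one_mul, Real.dist_eq]
    have h1 : |f a - f b| ≤ dist (γ a) (γ b) := by
      simpa [f, dist_comm] using abs_dist_sub_le (γ a) (γ b) x
    rw [hγ a b, ← Real.dist_eq] at h1
    exact h1
  obtain ⟨t₀, ht₀mem, ht₀⟩ := isCompact_Icc.exists_isMinOn
    (nonempty_Icc.2 (by linarith : -(2*R+1) ≤ 2*R+1)) hcont.continuousOn
  refine ⟨t₀, fun t => ?_⟩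
  by_cases ht : t ∈ Icc (-(2*R+1)) (2*R+1)
  · exact ht₀ ht
  · have h0 : f t₀ ≤ R := ht₀ ⟨by linarith, by linarith⟩
    have habs : 2*R+1 ≤ |t| := by
      rcases not_and_or.1 (mem_Icc.1.mt ht) with h | h
      · rw [abs_of_nonpos (by push_neg at h; linarith)]; push_neg at h; linarith
      · rw [abs_of_nonneg (by push_neg at h; linarith)]; push_neg at h; linarith
    have : |t| - R ≤ f t := by
      have h1 : dist (γ 0) (γ t) = |t| := by simpa using (hγ 0 t)
      have := dist_triangle (γ 0) x (γ t)
      rw [h1] at this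
      have h2 : dist (γ 0) x = R := dist_comm (γ 0) x ▸ rfl
      rw [h2] at this
      simpa [f] using by linarith
    linarith

end S7Construction


section S7Main

variable {X : Type*} [MetricSpace X] [ProperSpace X]

lemma s7_part1 {δ : ℝ} (hδ : 0 ≤ δ)
    (hgeo : GeodesicSpaceWrt (distFun X)) (hhyp : DeltaHyperbolicWrt (distFun X) δ)
    {γ : ℝ → X} (hγ : ∀ a b : ℝ, dist (γ a) (γ b) = |a - b|) (t₀ : ℝ) (z : X) :
    ∃ g : ℝ → X, IsGeodesicRayWrt (distFun X) g ∧ g 0 = z ∧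
      ∃ t ∈ Ici (0:ℝ), dist (γ t₀) (g t) ≤ δ := by
  set p := γ t₀ with hp
  have hQ : ∀ n : ℕ, ∃ σL : (ℝ → X) × ℝ × ℝ,
      σL.1 0 = z ∧
      (∀ a ∈ Icc 0 σL.2.1, ∀ b ∈ Icc 0 σL.2.1, dist (σL.1 a) (σL.1 b) = |a - b|) ∧
      (|t₀| + 1 + n - dist z (γ 0) ≤ σL.2.1) ∧
      σL.2.2 ∈ Icc 0 σL.2.1 ∧ dist p (σL.1 σL.2.2) ≤ δ := by
    intro n
    set T : ℝ := |t₀| + 1 + n with hT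
    have hT1 : |t₀| + 1 ≤ T :=
      le_add_of_nonneg_right (Nat.cast_nonneg n)
    have hT0 : 0 ≤ T := le_trans (by positivity) hT1
    have hab : dist (γ (-T)) (γ T) = 2 * T := by
      rw [hγ]; rw [abs_of_nonpos (by linarith)]; ring
    have habe : distFun X (γ (-T)) (γ T) = 2 * T := hab
    set γ₁ : ℝ → X := fun t => γ (t - T) with hγ₁
    have h₁ : IsGeodesicSegWrt (distFun X) γ₁ (γ (-T)) (γ T) := by
      refine ⟨by simp [hγ₁], ?_, ?_⟩
      · show γ₁ (distFun X (γ (-T)) (γ T)) = γ T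
        rw [habe]; simp only [hγ₁]; congr 1; ring
      · intro a _ b _
        show distFun X (γ (a - T)) (γ (b - T)) = |a - b|
        show dist (γ (a - T)) (γ (b - T)) = |a - b|
        rw [hγ]; congr 1; ring
    obtain ⟨ζ₂, h₂⟩ := hgeo (γ T) z
    obtain ⟨ζ₃, h₃⟩ := hgeo z (γ (-T))
    have hthin := (hhyp (γ (-T)) (γ T) z γ₁ ζ₂ ζ₃ h₁ h₂ h₃).1
    have hpmem : p ∈ segImageWrt (distFun X) γ₁ (γ (-T)) (γ T) := by
      refine ⟨t₀ + T, ?_, ?_⟩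
      · rw [habe]
        constructor
        · have := neg_abs_le t₀; linarith
        · have := le_abs_self t₀; linarith
      · simp only [hγ₁, hp]; congr 1; ring
    obtain ⟨q, hq, hpq⟩ := hthin _ hpmem
    have hpq' : dist p q ≤ δ := hpq
    rcases hq with hq | hq
    · obtain ⟨u, hu, rfl⟩ := hq
      have hu' : u ∈ Icc 0 (dist (γ T) z) := hu
      set Lv : ℝ := dist (γ T) z with hLv
      have hz : ζ₂ Lv = z := h₂.2.1
      have hiso₂ : ∀ a ∈ Icc (0:ℝ) Lv, ∀ b ∈ Icc (0:ℝ) Lv, dist (ζ₂ a) (ζ₂ b) = |a - b| :=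
        h₂.2.2
      refine ⟨⟨fun t => ζ₂ (Lv - t), Lv, Lv - u⟩, ?_, ?_, ?_, ?_, ?_⟩
      · show ζ₂ (Lv - 0) = z
        rw [sub_zero, hz]
      · intro a ha b hb
        show dist (ζ₂ (Lv - a)) (ζ₂ (Lv - b)) = |a - b|
        rw [hiso₂ _ ⟨by linarith [hb.1, ha.2], by linarith [ha.1]⟩
          _ ⟨by linarith [hb.2], by linarith [hb.1]⟩]
        rw [show Lv - a - (Lv - b) = b - a by ring, abs_sub_comm]
      · show |t₀| + 1 + n - dist z (γ 0) ≤ Lv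
        have h1 : dist (γ T) (γ 0) ≤ Lv + dist z (γ 0) := by
          have := dist_triangle (γ T) z (γ 0); linarith [this]
        have h2 : dist (γ T) (γ 0) = T := by
          rw [hγ, show T - (0:ℝ) = T by ring, abs_of_nonneg hT0]
        rw [h2] at h1; rw [← hT]; linarith
      · refine ⟨?_, ?_⟩
        · show (0:ℝ) ≤ Lv - u
          linarith [hu'.2]
        · show Lv - u ≤ Lv
          linarith [hu'.1]
      · show dist p (ζ₂ (Lv - (Lv - u))) ≤ δ
        rw [show Lv - (Lv - u) = u by ring]
        exact hpq'
    · obtain ⟨u, hu, rfl⟩ := hq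
      have hu' : u ∈ Icc 0 (dist z (γ (-T))) := hu
      refine ⟨⟨ζ₃, dist z (γ (-T)), u⟩, h₃.1, h₃.2.2, ?_, hu', hpq'⟩
      show |t₀| + 1 + n - dist z (γ 0) ≤ dist z (γ (-T))
      have h1 : dist (γ (-T)) (γ 0) ≤ dist z (γ (-T)) + dist z (γ 0) := by
        have := dist_triangle (γ (-T)) z (γ 0)
        have h2 := dist_comm (γ (-T)) z
        linarith
      have h2 : dist (γ (-T)) (γ 0) = T := by
        rw [hγ]; rw [abs_of_nonpos (by linarith)]; ring
      rw [h2] at h1; rw [← hT]; linarith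
  choose σL hσ0 hσiso hσL hσs hσp using hQ
  set σ : ℕ → ℝ → X := fun n => (σL n).1
  set L : ℕ → ℝ := fun n => (σL n).2.1
  set s : ℕ → ℝ := fun n => (σL n).2.2
  have hLtend : Tendsto L atTop atTop := by
    refine tendsto_atTop_mono (fun n => hσL n) ?_
    have h1 : Tendsto (fun n : ℕ => (n:ℝ)) atTop atTop := tendsto_natCast_atTop_atTop
    have h2 : Tendsto (fun n : ℕ => (n:ℝ) + (|t₀| + 1 - dist z (γ 0))) atTop atTop :=
      tendsto_atTop_add_const_right _ _ h1
    refine h2.congr (fun n => by ring)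
  obtain ⟨g, hray, hg0, t, ht, hgt⟩ := s7_ray_limit σ L s z p hσ0 hσiso hLtend hσs hσp
  exact ⟨g, hray, hg0, t, ht, hgt⟩

end S7Main


section S7Main2

variable {X : Type*} [MetricSpace X] [ProperSpace X]

lemma s7_part2 {δ : ℝ} (hδ : 0 ≤ δ)
    (hgeo : GeodesicSpaceWrt (distFun X)) (hhyp : DeltaHyperbolicWrt (distFun X) δ)
    {γ : ℝ → X} (hγ : ∀ a b : ℝ, dist (γ a) (γ b) = |a - b|) (t₀ : ℝ)
    {ρ : ℝ → X} (hρ : IsGeodesicRayWrt (distFun X) ρ) :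
    ∃ g : ℝ → X, IsGeodesicLineWrt (distFun X) g ∧
      RayEquivWrt (distFun X) (fun t => g (-t)) ρ ∧ dist (γ t₀) (g 0) ≤ δ := by
  set p := γ t₀ with hp
  have hρd : ∀ a : ℝ, 0 ≤ a → ∀ b : ℝ, 0 ≤ b → dist (ρ a) (ρ b) = |a - b| :=
    fun a ha b hb => hρ a ha b hb
  set d₀ : ℝ := dist (ρ 0) p with hd₀
  have hd₀0 : 0 ≤ d₀ := dist_nonneg
  set T : ℕ → ℝ := fun n => |t₀| + 1 + n with hTdef
  have hT1 : ∀ n, |t₀| + 1 ≤ T n := fun n => le_add_of_nonneg_right (Nat.cast_nonneg n)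
  have hT0 : ∀ n, 0 ≤ T n := fun n => le_trans (by positivity) (hT1 n)
  have hQ : ∀ n : ℕ, ∃ σL : (ℝ → X) × ℝ × ℝ,
      σL.1 0 = ρ (T n) ∧
      (∀ a ∈ Icc 0 σL.2.1, ∀ b ∈ Icc 0 σL.2.1, dist (σL.1 a) (σL.1 b) = |a - b|) ∧
      σL.2.2 ∈ Icc 0 σL.2.1 ∧ dist p (σL.1 σL.2.2) ≤ δ ∧
      (T n - (d₀ + δ) ≤ σL.2.2) ∧ (σL.2.2 ≤ T n + (d₀ + δ)) ∧
      (T n - |t₀| - δ ≤ σL.2.1 - σL.2.2) := by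
    intro n
    have hab : dist (γ (-(T n))) (γ (T n)) = 2 * T n := by
      rw [hγ]; rw [abs_of_nonpos (by linarith [hT0 n])]; ring
    have habe : distFun X (γ (-(T n))) (γ (T n)) = 2 * T n := hab
    set γ₁ : ℝ → X := fun t => γ (t - T n) with hγ₁
    have h₁ : IsGeodesicSegWrt (distFun X) γ₁ (γ (-(T n))) (γ (T n)) := by
      refine ⟨by simp [hγ₁], ?_, ?_⟩
      · show γ₁ (distFun X (γ (-(T n))) (γ (T n))) = γ (T n)
        rw [habe]; simp only [hγ₁]; congr 1; ring
      · intro a _ b _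
        show dist (γ (a - T n)) (γ (b - T n)) = |a - b|
        rw [hγ]; congr 1; ring
    obtain ⟨ζ₂, h₂⟩ := hgeo (γ (T n)) (ρ (T n))
    obtain ⟨ζ₃, h₃⟩ := hgeo (ρ (T n)) (γ (-(T n)))
    have hthin := (hhyp (γ (-(T n))) (γ (T n)) (ρ (T n)) γ₁ ζ₂ ζ₃ h₁ h₂ h₃).1
    have hpmem : p ∈ segImageWrt (distFun X) γ₁ (γ (-(T n))) (γ (T n)) := by
      refine ⟨t₀ + T n, ?_, ?_⟩
      · rw [habe]
        constructor
        · have := neg_abs_le t₀; linarith [hT1 n]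
        · have := le_abs_self t₀; linarith [hT1 n]
      · simp only [hγ₁, hp]; congr 1; ring
    obtain ⟨q, hq, hpq⟩ := hthin _ hpmem
    have hpq' : dist p q ≤ δ := hpq
    -- distance facts about `p`
    have hρTp_low : T n - d₀ ≤ dist (ρ (T n)) p := by
      have h1 : dist (ρ (T n)) (ρ 0) = T n := by
        rw [hρd _ (hT0 n) _ le_rfl, sub_zero, abs_of_nonneg (hT0 n)]
      have := dist_triangle (ρ (T n)) p (ρ 0)
      rw [h1] at this
      have h2 := dist_comm p (ρ 0)
      rw [hd₀]; linarith
    have hρTp_high : dist (ρ (T n)) p ≤ T n + d₀ := by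
      have h1 : dist (ρ (T n)) (ρ 0) = T n := by
        rw [hρd _ (hT0 n) _ le_rfl, sub_zero, abs_of_nonneg (hT0 n)]
      have := dist_triangle (ρ (T n)) (ρ 0) p
      rw [h1] at this
      rw [hd₀]; linarith
    rcases hq with hq | hq
    · -- `q` on the side from `γ (T n)` to `ρ (T n)`: reverse it
      obtain ⟨u, hu, rfl⟩ := hq
      have hu' : u ∈ Icc 0 (dist (γ (T n)) (ρ (T n))) := hu
      set Lv : ℝ := dist (γ (T n)) (ρ (T n)) with hLv
      have hz : ζ₂ Lv = ρ (T n) := h₂.2.1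
      have hζ0 : ζ₂ 0 = γ (T n) := h₂.1
      have hiso₂ : ∀ a ∈ Icc (0:ℝ) Lv, ∀ b ∈ Icc (0:ℝ) Lv, dist (ζ₂ a) (ζ₂ b) = |a - b| :=
        h₂.2.2
      have hL0 : 0 ≤ Lv := dist_nonneg
      refine ⟨⟨fun t => ζ₂ (Lv - t), Lv, Lv - u⟩, ?_, ?_, ?_, ?_, ?_, ?_, ?_⟩
      · show ζ₂ (Lv - 0) = ρ (T n)
        rw [sub_zero, hz]
      · intro a ha b hb
        show dist (ζ₂ (Lv - a)) (ζ₂ (Lv - b)) = |a - b|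
        rw [hiso₂ _ ⟨by linarith [ha.2], by linarith [ha.1]⟩
          _ ⟨by linarith [hb.2], by linarith [hb.1]⟩]
        rw [show Lv - a - (Lv - b) = b - a by ring, abs_sub_comm]
      · refine ⟨?_, ?_⟩
        · show (0:ℝ) ≤ Lv - u
          linarith [hu'.2]
        · show Lv - u ≤ Lv
          linarith [hu'.1]
      · show dist p (ζ₂ (Lv - (Lv - u))) ≤ δ
        rw [show Lv - (Lv - u) = u by ring]
        exact hpq'
      · -- s = Lv - u = dist (ρ (T n)) q
        show T n - (d₀ + δ) ≤ Lv - u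
        have h1 : dist (ζ₂ u) (ζ₂ Lv) = Lv - u := by
          rw [hiso₂ _ hu' _ ⟨hL0, le_rfl⟩, abs_of_nonpos (by linarith [hu'.2])]; ring
        rw [hz] at h1
        have h2 : dist (ρ (T n)) p ≤ dist (ρ (T n)) (ζ₂ u) + dist (ζ₂ u) p := dist_triangle _ _ _
        rw [dist_comm (ρ (T n)) (ζ₂ u), h1, dist_comm (ζ₂ u) p] at h2
        linarith [hρTp_low]
      · show Lv - u ≤ T n + (d₀ + δ)
        have h1 : dist (ζ₂ u) (ζ₂ Lv) = Lv - u := by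
          rw [hiso₂ _ hu' _ ⟨hL0, le_rfl⟩, abs_of_nonpos (by linarith [hu'.2])]; ring
        rw [hz] at h1
        have h2 : dist (ζ₂ u) (ρ (T n)) ≤ dist (ζ₂ u) p + dist p (ρ (T n)) := dist_triangle _ _ _
        rw [h1, dist_comm (ζ₂ u) p, dist_comm p (ρ (T n))] at h2
        linarith [hρTp_high]
      · -- M - s = u = dist (q, γ (T n))
        show T n - |t₀| - δ ≤ Lv - (Lv - u)
        rw [show Lv - (Lv - u) = u by ring]
        have h1 : dist (ζ₂ u) (ζ₂ 0) = u := by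
          rw [hiso₂ _ hu' _ ⟨le_rfl, hL0⟩, sub_zero, abs_of_nonneg hu'.1]
        rw [hζ0] at h1
        have h2 : dist p (γ (T n)) = |t₀ - T n| := by rw [hp, hγ]
        have h3 : dist p (γ (T n)) ≤ dist p (ζ₂ u) + dist (ζ₂ u) (γ (T n)) := dist_triangle _ _ _
        rw [h1, h2] at h3
        have h4 : T n - |t₀| ≤ |t₀ - T n| := by
          have h5 := abs_sub_abs_le_abs_sub (T n) t₀
          rw [abs_of_nonneg (hT0 n)] at h5
          rw [abs_sub_comm]
          linarith
        linarith
    · -- `q` on the side from `ρ (T n)` to `γ (-(T n))`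
      obtain ⟨u, hu, rfl⟩ := hq
      have hu' : u ∈ Icc 0 (dist (ρ (T n)) (γ (-(T n)))) := hu
      set Lv : ℝ := dist (ρ (T n)) (γ (-(T n))) with hLv
      have hz : ζ₃ Lv = γ (-(T n)) := h₃.2.1
      have hζ0 : ζ₃ 0 = ρ (T n) := h₃.1
      have hiso₃ : ∀ a ∈ Icc (0:ℝ) Lv, ∀ b ∈ Icc (0:ℝ) Lv, dist (ζ₃ a) (ζ₃ b) = |a - b| :=
        h₃.2.2
      have hL0 : 0 ≤ Lv := dist_nonneg
      have h1 : dist (ζ₃ u) (ζ₃ 0) = u := by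
        rw [hiso₃ _ hu' _ ⟨le_rfl, hL0⟩, sub_zero, abs_of_nonneg hu'.1]
      rw [hζ0] at h1
      refine ⟨⟨ζ₃, Lv, u⟩, hζ0, hiso₃, hu', hpq', ?_, ?_, ?_⟩
      · show T n - (d₀ + δ) ≤ u
        have h2 : dist (ρ (T n)) p ≤ dist (ρ (T n)) (ζ₃ u) + dist (ζ₃ u) p := dist_triangle _ _ _
        rw [dist_comm (ρ (T n)) (ζ₃ u), h1, dist_comm (ζ₃ u) p] at h2
        linarith [hρTp_low]
      · show u ≤ T n + (d₀ + δ)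
        have h2 : dist (ζ₃ u) (ρ (T n)) ≤ dist (ζ₃ u) p + dist p (ρ (T n)) := dist_triangle _ _ _
        rw [h1, dist_comm (ζ₃ u) p, dist_comm p (ρ (T n))] at h2
        linarith [hρTp_high]
      · show T n - |t₀| - δ ≤ Lv - u
        have h5 : dist (ζ₃ u) (ζ₃ Lv) = Lv - u := by
          rw [hiso₃ _ hu' _ ⟨hL0, le_rfl⟩, abs_of_nonpos (by linarith [hu'.2])]; ring
        rw [hz] at h5
        have h2 : dist p (γ (-(T n))) = |t₀ + T n| := by
          rw [hp, hγ]; congr 1; ring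
        have h3 : dist p (γ (-(T n))) ≤ dist p (ζ₃ u) + dist (ζ₃ u) (γ (-(T n))) :=
          dist_triangle _ _ _
        rw [h5, h2] at h3
        have h4 : T n - |t₀| ≤ |t₀ + T n| := by
          have h8 : |T n| ≤ |t₀ + T n| + |t₀| := by
            calc |T n| = |(t₀ + T n) + (-t₀)| := by congr 1; ring
              _ ≤ |t₀ + T n| + |(-t₀)| := abs_add_le _ _
              _ = |t₀ + T n| + |t₀| := by rw [abs_neg]
          rw [abs_of_nonneg (hT0 n)] at h8
          linarith
        linarith
  choose σL hσ0 hσiso hσs hσp hσlow hσhigh hσMs using hQ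
  set σ : ℕ → ℝ → X := fun n => (σL n).1 with hσdef
  set M : ℕ → ℝ := fun n => (σL n).2.1 with hMdef
  set s : ℕ → ℝ := fun n => (σL n).2.2 with hsdef
  have hσ0 : ∀ n, σ n 0 = ρ (T n) := hσ0
  have hσiso : ∀ n, ∀ a ∈ Icc 0 (M n), ∀ b ∈ Icc 0 (M n),
      dist (σ n a) (σ n b) = |a - b| := hσiso
  have hσs : ∀ n, s n ∈ Icc 0 (M n) := hσs
  have hσp : ∀ n, dist p (σ n (s n)) ≤ δ := hσp
  have hσlow : ∀ n, T n - (d₀ + δ) ≤ s n := hσlow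
  have hσhigh : ∀ n, s n ≤ T n + (d₀ + δ) := hσhigh
  have hσMs : ∀ n, T n - |t₀| - δ ≤ M n - s n := hσMs
  have hsT : Tendsto s atTop atTop := by
    refine tendsto_atTop_mono (fun n => hσlow n) ?_
    have h1 : Tendsto (fun n : ℕ => (n:ℝ)) atTop atTop := tendsto_natCast_atTop_atTop
    have h2 : Tendsto (fun n : ℕ => (n:ℝ) + (|t₀| + 1 - (d₀ + δ))) atTop atTop :=
      tendsto_atTop_add_const_right _ _ h1
    refine h2.congr (fun n => by simp only [hTdef]; ring)
  have hMsT : Tendsto (fun n => M n - s n) atTop atTop := by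
    refine tendsto_atTop_mono (fun n => hσMs n) ?_
    have h1 : Tendsto (fun n : ℕ => (n:ℝ)) atTop atTop := tendsto_natCast_atTop_atTop
    have h2 : Tendsto (fun n : ℕ => (n:ℝ) + (|t₀| + 1 - |t₀| - δ)) atTop atTop :=
      tendsto_atTop_add_const_right _ _ h1
    refine h2.congr (fun n => by simp only [hTdef]; ring)
  -- the hyperbolic comparison estimate
  have claim : ∀ n, ∀ t : ℝ, 0 ≤ t → t ≤ s n →
      dist (σ n (s n - t)) (ρ t) ≤ 3 * d₀ + 5 * δ := by
    intro n t ht0 hts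
    have hs0 : (0:ℝ) ≤ s n := (hσs n).1
    have hsM : s n ≤ M n := (hσs n).2
    set q : X := σ n (s n) with hqdef
    have hρseg : IsGeodesicSegWrt (distFun X) ρ (ρ 0) (ρ (T n)) := by
      have hd : distFun X (ρ 0) (ρ (T n)) = T n := by
        show dist (ρ 0) (ρ (T n)) = T n
        rw [hρd 0 le_rfl _ (hT0 n), abs_sub_comm, sub_zero, abs_of_nonneg (hT0 n)]
      refine ⟨rfl, by rw [hd], ?_⟩
      intro a ha b hb
      rw [hd] at ha hb
      exact hρd a ha.1 b hb.1
    have hdq : distFun X (ρ (T n)) q = s n := by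
      show dist (ρ (T n)) q = s n
      rw [← hσ0 n, hqdef]
      rw [hσiso n 0 ⟨le_rfl, le_trans hs0 hsM⟩ (s n) (hσs n), abs_sub_comm, sub_zero,
        abs_of_nonneg hs0]
    have hσseg : IsGeodesicSegWrt (distFun X) (σ n) (ρ (T n)) q := by
      refine ⟨hσ0 n, by rw [hdq], ?_⟩
      intro a ha b hb
      rw [hdq] at ha hb
      exact hσiso n a ⟨ha.1, le_trans ha.2 hsM⟩ b ⟨hb.1, le_trans hb.2 hsM⟩
    obtain ⟨ζ', hζ'⟩ := hgeo q (ρ 0)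
    have hthin := (hhyp (ρ 0) (ρ (T n)) q ρ (σ n) ζ' hρseg hσseg hζ').2.1
    have hwmem : σ n (s n - t) ∈ segImageWrt (distFun X) (σ n) (ρ (T n)) q := by
      refine ⟨s n - t, ?_, rfl⟩
      rw [hdq]
      exact ⟨by linarith, by linarith⟩
    obtain ⟨q', hq', hwq'⟩ := hthin _ hwmem
    have hwq : dist (σ n (s n - t)) q' ≤ δ := hwq'
    -- basic distances
    have hwρT : dist (σ n (s n - t)) (ρ (T n)) = s n - t := by
      rw [← hσ0 n]
      rw [hσiso n (s n - t) ⟨by linarith, by linarith⟩ 0 ⟨le_rfl, by linarith⟩, sub_zero,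
        abs_of_nonneg (by linarith)]
    have hqρ0 : dist q (ρ 0) ≤ d₀ + δ := by
      have := dist_triangle q p (ρ 0)
      have h2 := dist_comm q p
      have h3 := dist_comm p (ρ 0)
      have h4 := hσp n
      rw [hd₀]; rw [← hqdef] at h4; linarith
    have hρ0T : dist (ρ 0) (ρ (T n)) = T n := by
      rw [hρd 0 le_rfl _ (hT0 n), abs_sub_comm, sub_zero, abs_of_nonneg (hT0 n)]
    have hsTbound_low : T n - (d₀ + δ) ≤ s n := hσlow n
    have hsTbound_high : s n ≤ T n + (d₀ + δ) := hσhigh n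
    rcases hq' with hq' | hq'
    · -- Case A : q' on the ray ρ between ρ 0 and ρ (T n)
      obtain ⟨r, hr, rfl⟩ := hq'
      have hr' : r ∈ Icc (0:ℝ) (T n) := by
        have : distFun X (ρ 0) (ρ (T n)) = T n := hρ0T
        rw [this] at hr
        exact hr
      have hrT : dist (ρ r) (ρ (T n)) = T n - r := by
        rw [hρd r hr'.1 _ (hT0 n), abs_of_nonpos (by linarith [hr'.2])]; ring
      -- triangle comparisons
      have hA1 : s n - t ≤ δ + (T n - r) := by
        have := dist_triangle (σ n (s n - t)) (ρ r) (ρ (T n))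
        rw [hwρT, hrT] at this
        linarith
      have hA2 : T n - r ≤ δ + (s n - t) := by
        have := dist_triangle (ρ r) (σ n (s n - t)) (ρ (T n))
        rw [hwρT, hrT, dist_comm (ρ r) (σ n (s n - t))] at this
        linarith
      have hrt : |r - t| ≤ d₀ + 2 * δ := by
        rw [abs_le]
        constructor
        · linarith
        · linarith
      have hrhot : dist (ρ r) (ρ t) = |r - t| := hρd r hr'.1 t ht0
      have := dist_triangle (σ n (s n - t)) (ρ r) (ρ t)
      rw [hrhot] at this
      linarith
    · -- Case B : q' on the segment from q to ρ 0
      obtain ⟨u', hu', rfl⟩ := hq'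
      have hu'' : u' ∈ Icc (0:ℝ) (dist q (ρ 0)) := hu'
      have hζiso : ∀ a ∈ Icc (0:ℝ) (dist q (ρ 0)), ∀ b ∈ Icc (0:ℝ) (dist q (ρ 0)),
          dist (ζ' a) (ζ' b) = |a - b| := hζ'.2.2
      have hζlen : dist (ζ' u') (ρ 0) ≤ d₀ + δ := by
        have h1 : dist (ζ' u') (ζ' (dist q (ρ 0))) = dist q (ρ 0) - u' := by
          rw [hζiso u' hu'' (dist q (ρ 0)) ⟨dist_nonneg, le_rfl⟩,
            abs_of_nonpos (by linarith [hu''.2])]; ring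
        have h2 : ζ' (distFun X q (ρ 0)) = ρ 0 := hζ'.2.1
        have h2' : ζ' (dist q (ρ 0)) = ρ 0 := h2
        rw [h2'] at h1
        rw [h1]
        linarith [hu''.1, hqρ0]
      have hwρ0 : dist (σ n (s n - t)) (ρ 0) ≤ d₀ + 2 * δ := by
        have := dist_triangle (σ n (s n - t)) (ζ' u') (ρ 0)
        linarith
      have htb : t ≤ 2 * d₀ + 3 * δ := by
        have := dist_triangle (ρ 0) (σ n (s n - t)) (ρ (T n))
        rw [hρ0T, hwρT, dist_comm (ρ 0) (σ n (s n - t))] at this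
        linarith
      have hρ0t : dist (ρ 0) (ρ t) = t := by
        rw [hρd 0 le_rfl t ht0, abs_sub_comm, sub_zero, abs_of_nonneg ht0]
      have := dist_triangle (σ n (s n - t)) (ρ 0) (ρ t)
      rw [hρ0t] at this
      linarith
  obtain ⟨g, hline, hiv⟩ := s7_line_limit σ M s p hσiso hσs hsT hMsT hσp
  refine ⟨g, hline, ⟨3 * d₀ + 5 * δ, ?_⟩, ?_⟩
  · intro t ht
    show dist (g (-t)) (ρ t) ≤ 3 * d₀ + 5 * δ
    refine hiv (-t) (ρ t) _ ?_
    filter_upwards [hsT.eventually_ge_atTop t] with n hn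
    rw [show s n + -t = s n - t by ring]
    exact claim n t ht hn
  · have h1 : dist (g 0) p ≤ δ := by
      refine hiv 0 p δ (Filter.Eventually.of_forall (fun n => ?_))
      rw [add_zero, dist_comm]
      exact hσp n
    rw [dist_comm]
    exact h1

end S7Main2

/-- If a proper geodesic `δ`-hyperbolic space `X` whose Gromov boundary
contains at least two points is `K`-roughly starlike from a boundary point `ω ∈ ∂X`, then
it is `(K + 10δ)`-roughly starlike from every point of `X ∪ ∂X`. -/
theorem statement7 {X : Type*} [MetricSpace X] [ProperSpace X] (δ K : ℝ)
    (hδ : 0 ≤ δ) (hK : 0 ≤ K)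
    (hgeo : GeodesicSpaceWrt (distFun X)) (hhyp : DeltaHyperbolicWrt (distFun X) δ)
    (htwo : ∃ ρ₁ ρ₂ : ℝ → X, IsGeodesicRayWrt (distFun X) ρ₁ ∧
      IsGeodesicRayWrt (distFun X) ρ₂ ∧ ¬ RayEquivWrt (distFun X) ρ₁ ρ₂)
    (ω : ℝ → X) (hω : IsGeodesicRayWrt (distFun X) ω)
    (hstar : RoughStarlikeFromRayWrt (distFun X) K ω) :
    (∀ z : X, RoughStarlikeFromPointWrt (distFun X) (K + 10 * δ) z) ∧
    ∀ ρ : ℝ → X, IsGeodesicRayWrt (distFun X) ρ →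
      RoughStarlikeFromRayWrt (distFun X) (K + 10 * δ) ρ := by
  have near : ∀ x : X, ∃ (γ : ℝ → X) (t₀ : ℝ), (∀ a b : ℝ, dist (γ a) (γ b) = |a - b|) ∧
      dist x (γ t₀) ≤ K := by
    intro x
    obtain ⟨γ, hline, -, hinf⟩ := hstar x
    have hl : ∀ a b : ℝ, dist (γ a) (γ b) = |a - b| := hline
    obtain ⟨t₀, ht₀⟩ := s7_exists_min_dist hl x
    refine ⟨γ, t₀, hl, ?_⟩
    have h1 : dist x (γ t₀) ≤ sInf (distFun X x '' range γ) := by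
      have hne : (distFun X x '' range γ).Nonempty :=
        ⟨distFun X x (γ 0), ⟨γ 0, mem_range_self 0, rfl⟩⟩
      apply le_csInf hne
      rintro b ⟨y, ⟨t, rfl⟩, rfl⟩
      exact ht₀ t
    exact h1.trans hinf
  constructor
  · intro z x
    obtain ⟨γ, t₀, hl, hxp⟩ := near x
    obtain ⟨g, hray, hg0, t, htmem, hgt⟩ := s7_part1 hδ hgeo hhyp hl t₀ z
    refine ⟨g, hray, hg0, ?_⟩
    have hmem : distFun X x (g t) ∈ distFun X x '' (g '' Ici 0) := ⟨g t, ⟨t, htmem, rfl⟩, rfl⟩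
    have hb : BddBelow (distFun X x '' (g '' Ici 0)) :=
      ⟨0, by rintro r ⟨y, -, rfl⟩; exact dist_nonneg⟩
    show sInf (distFun X x '' (g '' Ici 0)) ≤ K + 10 * δ
    refine (csInf_le hb hmem).trans ?_
    show dist x (g t) ≤ K + 10 * δ
    calc dist x (g t) ≤ dist x (γ t₀) + dist (γ t₀) (g t) := dist_triangle _ _ _
      _ ≤ K + 10 * δ := by linarith [hxp, hgt]
  · intro ρ hρ x
    obtain ⟨γ, t₀, hl, hxp⟩ := near x
    obtain ⟨g, hline, hequiv, hg0⟩ := s7_part2 hδ hgeo hhyp hl t₀ hρ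
    refine ⟨g, hline, hequiv, ?_⟩
    have hmem : distFun X x (g 0) ∈ distFun X x '' range g := ⟨g 0, mem_range_self 0, rfl⟩
    have hb : BddBelow (distFun X x '' range g) :=
      ⟨0, by rintro r ⟨y, -, rfl⟩; exact dist_nonneg⟩
    show sInf (distFun X x '' range g) ≤ K + 10 * δ
    refine (csInf_le hb hmem).trans ?_
    show dist x (g 0) ≤ K + 10 * δ
    calc dist x (g 0) ≤ dist x (γ t₀) + dist (γ t₀) (g 0) := dist_triangle _ _ _
      _ ≤ K + 10 * δ := by linarith [hxp, hg0]

end Paper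

end
end

section
/- Let (Ω,d) be an incomplete metric space, let A ≥ 1, and let γ: I → Ω be a curve such that for every compact subinterval J ⊂ I the restriction γ|_J is an A-uniform curve. Then γ is an A-uniform curve. -/
open Metric Set Filter Topology
open scoped ENNReal Classical

noncomputable section

namespace Paper

variable {X Y : Type*}

section AuxStatement10

variable {Ω : Type*} [MetricSpace Ω]

variable {Ω : Type*} [MetricSpace Ω]

lemma varOn_mono (γ : ℝ → Ω) {I J : Set ℝ} (hIJ : I ⊆ J) :
    varOn (distFun Ω) γ I ≤ varOn (distFun Ω) γ J := by
  refine iSup_le fun p => ?_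
  exact le_iSup_of_le ⟨p.1, ⟨p.2.1, p.2.2.1, fun i => hIJ (p.2.2.2 i)⟩⟩ le_rfl

lemma ofReal_dist_le_varOn (γ : ℝ → Ω) {I : Set ℝ} {a b : ℝ}
    (ha : a ∈ I) (hb : b ∈ I) (hab : a ≤ b) :
    ENNReal.ofReal (dist (γ a) (γ b)) ≤ varOn (distFun Ω) γ I := by
  set u : ℕ → ℝ := fun j => if j = 0 then a else b with hu
  have hmono : Monotone u := by
    intro i j hij
    simp only [hu]
    split_ifs with h1 h2 h2
    · exact le_rfl
    · exact hab
    · omega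
    · exact le_rfl
  have hmem : ∀ i, u i ∈ I := by
    intro i; simp only [hu]; split_ifs <;> assumption
  have : ENNReal.ofReal (dist (γ a) (γ b)) =
      ∑ i ∈ Finset.range 1,
        ENNReal.ofReal (distFun Ω (γ (u (i + 1))) (γ (u i))) := by
    simp [hu, distFun, dist_comm]
  rw [this]
  exact le_iSup (fun p : ℕ × { u : ℕ → ℝ // Monotone u ∧ ∀ i, u i ∈ I } =>
    ∑ i ∈ Finset.range p.1, ENNReal.ofReal (distFun Ω (γ (p.2.1 (i + 1))) (γ (p.2.1 i))))
    (⟨1, ⟨u, hmono, hmem⟩⟩)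

lemma varOn_le_of_Icc (γ : ℝ → Ω) {I : Set ℝ} {C : ℝ≥0∞}
    (hC : ∀ a b, a ∈ I → b ∈ I → a ≤ b → varOn (distFun Ω) γ (Icc a b) ≤ C) :
    varOn (distFun Ω) γ I ≤ C := by
  refine iSup_le fun p => ?_
  obtain ⟨n, u, hu, huI⟩ := p
  dsimp only
  set v : ℕ → ℝ := fun i => u (min i n) with hv
  have hvmono : Monotone v := fun i j hij => hu (min_le_min_right n hij)
  have hvmem : ∀ i, v i ∈ Icc (u 0) (u n) :=
    fun i => ⟨hu (Nat.zero_le _), hu (min_le_right _ _)⟩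
  have heq : ∑ i ∈ Finset.range n, ENNReal.ofReal (distFun Ω (γ (u (i + 1))) (γ (u i))) =
      ∑ i ∈ Finset.range n, ENNReal.ofReal (distFun Ω (γ (v (i + 1))) (γ (v i))) := by
    refine Finset.sum_congr rfl fun i hi => ?_
    rw [Finset.mem_range] at hi
    have h1 : min i n = i := min_eq_left hi.le
    have h2 : min (i + 1) n = i + 1 := min_eq_left hi
    rw [hv]; dsimp only; rw [h1, h2]
  rw [heq]
  refine le_trans ?_ (hC (u 0) (u n) (huI 0) (huI n) (hu (Nat.zero_le n)))
  exact le_iSup (fun p : ℕ × { w : ℕ → ℝ // Monotone w ∧ ∀ i, w i ∈ Icc (u 0) (u n) } =>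
    ∑ i ∈ Finset.range p.1, ENNReal.ofReal (distFun Ω (γ (p.2.1 (i + 1))) (γ (p.2.1 i))))
    (⟨n, ⟨v, hvmono, hvmem⟩⟩)


lemma varOn_superadd (γ : ℝ → Ω) {a t b : ℝ} (hat : a ≤ t) (htb : t ≤ b) :
    varOn (distFun Ω) γ (Icc a t) + varOn (distFun Ω) γ (Icc t b) ≤
      varOn (distFun Ω) γ (Icc a b) := by
  have hne1 : Nonempty (ℕ × { u : ℕ → ℝ // Monotone u ∧ ∀ i, u i ∈ Icc a t }) :=
    ⟨⟨0, ⟨fun _ => t, monotone_const, fun _ => ⟨hat, le_rfl⟩⟩⟩⟩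
  have hne2 : Nonempty (ℕ × { u : ℕ → ℝ // Monotone u ∧ ∀ i, u i ∈ Icc t b }) :=
    ⟨⟨0, ⟨fun _ => t, monotone_const, fun _ => ⟨le_rfl, htb⟩⟩⟩⟩
  refine ENNReal.iSup_add_iSup_le ?_
  rintro ⟨n, u, hu, huI⟩ ⟨m, v, hv, hvI⟩
  dsimp only
  set w : ℕ → ℝ := fun i => if i ≤ n then u i else v (i - (n + 1)) with hw
  have hwmono : Monotone w := by
    intro i j hij
    simp only [hw]
    split_ifs with h1 h2 h2
    · exact hu hij
    · exact le_trans (huI i).2 (hvI _).1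
    · exact absurd (hij.trans h2) h1
    · exact hv (Nat.sub_le_sub_right hij _)
  have hwmem : ∀ i, w i ∈ Icc a b := by
    intro i; simp only [hw]; split_ifs with h1
    · exact ⟨(huI i).1, (huI i).2.trans htb⟩
    · exact ⟨hat.trans (hvI _).1, (hvI _).2⟩
  have key : (∑ i ∈ Finset.range n, ENNReal.ofReal (distFun Ω (γ (u (i + 1))) (γ (u i)))) +
      (∑ i ∈ Finset.range m, ENNReal.ofReal (distFun Ω (γ (v (i + 1))) (γ (v i)))) ≤
      ∑ i ∈ Finset.range (n + 1 + m), ENNReal.ofReal (distFun Ω (γ (w (i + 1))) (γ (w i))) := by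
    rw [Finset.sum_range_add]
    refine add_le_add ?_ (le_of_eq (Finset.sum_congr rfl fun i _ => ?_))
    · rw [Finset.sum_range_succ]
      refine le_trans (le_of_eq (Finset.sum_congr rfl fun i hi => ?_)) le_self_add
      rw [Finset.mem_range] at hi
      have h1 : w i = u i := by simp only [hw]; rw [if_pos hi.le]
      have h2 : w (i + 1) = u (i + 1) := by
        simp only [hw]; rw [if_pos (by omega : i + 1 ≤ n)]
      rw [h1, h2]
    · have h1 : w (n + 1 + i) = v i := by
        simp only [hw]; rw [if_neg (by omega)]; congr 1; omega
      have h2 : w (n + 1 + i + 1) = v (i + 1) := by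
        simp only [hw]; rw [if_neg (by omega)]; congr 1; omega
      rw [h1, h2]
  refine le_trans key ?_
  exact le_iSup (fun p : ℕ × { u : ℕ → ℝ // Monotone u ∧ ∀ i, u i ∈ Icc a b } =>
    ∑ i ∈ Finset.range p.1, ENNReal.ofReal (distFun Ω (γ (p.2.1 (i + 1))) (γ (p.2.1 i))))
    (⟨n + 1 + m, ⟨w, hwmono, hwmem⟩⟩)

lemma leftEndFilter_neBot {I : Set ℝ} (hne : I.Nonempty) : (leftEndFilter I).NeBot := by
  unfold leftEndFilter
  split_ifs with hb
  · exact mem_closure_iff_nhdsWithin_neBot.mp (csInf_mem_closure hne hb)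
  · rw [Filter.inf_principal_neBot_iff]
    intro U hU
    obtain ⟨c, hc⟩ := Filter.mem_atBot_sets.mp hU
    rw [not_bddBelow_iff] at hb
    obtain ⟨x, hxI, hxc⟩ := hb c
    exact ⟨x, hc x hxc.le, hxI⟩

lemma rightEndFilter_neBot {I : Set ℝ} (hne : I.Nonempty) : (rightEndFilter I).NeBot := by
  unfold rightEndFilter
  split_ifs with hb
  · exact mem_closure_iff_nhdsWithin_neBot.mp (csSup_mem_closure hne hb)
  · rw [Filter.inf_principal_neBot_iff]
    intro U hU
    obtain ⟨c, hc⟩ := Filter.mem_atTop_sets.mp hU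
    rw [not_bddAbove_iff] at hb
    obtain ⟨x, hxI, hxc⟩ := hb c
    exact ⟨x, hc x hxc.le, hxI⟩

lemma leftEndFilter_mem {I : Set ℝ} : ∀ᶠ s in leftEndFilter I, s ∈ I := by
  unfold leftEndFilter
  split_ifs with hb
  · exact eventually_mem_nhdsWithin
  · exact Filter.mem_inf_of_right (Filter.mem_principal_self I)

lemma rightEndFilter_mem {I : Set ℝ} : ∀ᶠ s in rightEndFilter I, s ∈ I := by
  unfold rightEndFilter
  split_ifs with hb
  · exact eventually_mem_nhdsWithin
  · exact Filter.mem_inf_of_right (Filter.mem_principal_self I)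

lemma leftEndFilter_dichotomy {I : Set ℝ} :
    (∃ m, IsLeast I m ∧ leftEndFilter I = 𝓝[I] m) ∨
      (∀ a ∈ I, ∀ᶠ s in leftEndFilter I, s ∈ I ∧ s ≤ a) := by
  unfold leftEndFilter
  by_cases hb : BddBelow I
  · rw [if_pos hb]
    by_cases hm : sInf I ∈ I
    · exact Or.inl ⟨sInf I, ⟨hm, fun x hx => csInf_le hb hx⟩, rfl⟩
    · right; intro a ha
      have h1 : sInf I < a :=
        lt_of_le_of_ne (csInf_le hb ha) (fun h => hm (h ▸ ha))
      have h2 : Iio a ∈ 𝓝[I] (sInf I) :=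
        mem_nhdsWithin_of_mem_nhds (Iio_mem_nhds h1)
      filter_upwards [h2, eventually_mem_nhdsWithin] with s hs hsI
      exact ⟨hsI, le_of_lt hs⟩
  · rw [if_neg hb]; right; intro a ha
    filter_upwards [Filter.mem_inf_of_left (Iic_mem_atBot a),
      Filter.mem_inf_of_right (Filter.mem_principal_self I)] with s hs hsI
    exact ⟨hsI, hs⟩

lemma rightEndFilter_dichotomy {I : Set ℝ} :
    (∃ m, IsGreatest I m ∧ rightEndFilter I = 𝓝[I] m) ∨
      (∀ a ∈ I, ∀ᶠ s in rightEndFilter I, s ∈ I ∧ a ≤ s) := by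
  unfold rightEndFilter
  by_cases hb : BddAbove I
  · rw [if_pos hb]
    by_cases hm : sSup I ∈ I
    · exact Or.inl ⟨sSup I, ⟨hm, fun x hx => le_csSup hb hx⟩, rfl⟩
    · right; intro a ha
      have h1 : a < sSup I :=
        lt_of_le_of_ne (le_csSup hb ha) (fun h => hm (h ▸ ha))
      have h2 : Ioi a ∈ 𝓝[I] (sSup I) :=
        mem_nhdsWithin_of_mem_nhds (Ioi_mem_nhds h1)
      filter_upwards [h2, eventually_mem_nhdsWithin] with s hs hsI
      exact ⟨hsI, le_of_lt hs⟩
  · rw [if_neg hb]; right; intro a ha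
    filter_upwards [Filter.mem_inf_of_left (Ici_mem_atTop a),
      Filter.mem_inf_of_right (Filter.mem_principal_self I)] with s hs hsI
    exact ⟨hsI, hs⟩

lemma leftEndFilter_Icc {a b : ℝ} (hab : a ≤ b) :
    leftEndFilter (Icc a b) = 𝓝[Icc a b] a := by
  unfold leftEndFilter
  rw [if_pos bddBelow_Icc, csInf_Icc hab]

lemma rightEndFilter_Icc {a b : ℝ} (hab : a ≤ b) :
    rightEndFilter (Icc a b) = 𝓝[Icc a b] b := by
  unfold rightEndFilter
  rw [if_pos bddAbove_Icc, csSup_Icc hab]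

lemma var_bound_of_compact {A : ℝ} {γ : ℝ → Ω} {a b : ℝ} (hab : a ≤ b)
    (hu : IsUniformCurve A γ (Icc a b)) :
    varOn (distFun Ω) γ (Icc a b) ≤ ENNReal.ofReal (A * dist (γ a) (γ b)) := by
  obtain ⟨-, -, hc, hbr, -⟩ := hu
  have haI : a ∈ Icc a b := ⟨le_rfl, hab⟩
  have hbI : b ∈ Icc a b := ⟨hab, le_rfl⟩
  haveI hna : (𝓝[Icc a b] a).NeBot :=
    mem_closure_iff_nhdsWithin_neBot.mp (subset_closure haI)
  haveI hnb : (𝓝[Icc a b] b).NeBot :=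
    mem_closure_iff_nhdsWithin_neBot.mp (subset_closure hbI)
  have hta : Tendsto (fun t => (γ t : UniformSpace.Completion Ω)) (𝓝[Icc a b] a)
      (𝓝 (γ a : UniformSpace.Completion Ω)) :=
    ((UniformSpace.Completion.continuous_coe Ω).tendsto _).comp (hc a haI)
  have htb : Tendsto (fun t => (γ t : UniformSpace.Completion Ω)) (𝓝[Icc a b] b)
      (𝓝 (γ b : UniformSpace.Completion Ω)) :=
    ((UniformSpace.Completion.continuous_coe Ω).tendsto _).comp (hc b hbI)
  rcases hbr with ⟨-, gm, gp, hgm, hgp, hle⟩ | ⟨-, htop⟩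
  · rw [leftEndFilter_Icc hab] at hgm
    rw [rightEndFilter_Icc hab] at hgp
    have e1 : gm = (γ a : UniformSpace.Completion Ω) := tendsto_nhds_unique hgm hta
    have e2 : gp = (γ b : UniformSpace.Completion Ω) := tendsto_nhds_unique hgp htb
    rwa [e1, e2, UniformSpace.Completion.dist_eq] at hle
  · exfalso
    rw [leftEndFilter_Icc hab, rightEndFilter_Icc hab] at htop
    haveI : ((𝓝[Icc a b] a) ×ˢ (𝓝[Icc a b] b)).NeBot := Filter.prod_neBot.mpr ⟨hna, hnb⟩
    have hconv : Tendsto (fun pq : ℝ × ℝ => dist (γ pq.1) (γ pq.2))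
        ((𝓝[Icc a b] a) ×ˢ (𝓝[Icc a b] b)) (𝓝 (dist (γ a) (γ b))) := by
      exact Filter.Tendsto.dist (Filter.Tendsto.comp (hc a haI) tendsto_fst)
        (Filter.Tendsto.comp (hc b hbI) tendsto_snd)
    exact not_tendsto_nhds_of_tendsto_atTop htop _ hconv

lemma exists_tail_bound {γ : ℝ → Ω} {I : Set ℝ} (hne : I.Nonempty) (hconn : I.OrdConnected)
    (hV : varOn (distFun Ω) γ I ≠ ⊤) {ε : ℝ} (hε : 0 < ε) :
    ∃ a b, a ∈ I ∧ b ∈ I ∧ a ≤ b ∧ ∀ s t, s ∈ I → t ∈ I → s ≤ t → (t ≤ a ∨ b ≤ s) →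
      varOn (distFun Ω) γ (Icc s t) ≤ ENNReal.ofReal ε := by
  by_cases h0 : varOn (distFun Ω) γ I = 0
  · obtain ⟨x, hx⟩ := hne
    refine ⟨x, x, hx, hx, le_rfl, fun s t hs ht hst _ => ?_⟩
    calc varOn (distFun Ω) γ (Icc s t) ≤ varOn (distFun Ω) γ I :=
          varOn_mono γ (hconn.out hs ht)
      _ = 0 := h0
      _ ≤ _ := zero_le
  · have hc : ENNReal.ofReal ε ≠ 0 := by
      simp [ENNReal.ofReal_eq_zero, not_le, hε]
    obtain ⟨a, b, ha, hb, hab, hV2⟩ : ∃ a b, a ∈ I ∧ b ∈ I ∧ a ≤ b ∧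
        varOn (distFun Ω) γ I ≤ varOn (distFun Ω) γ (Icc a b) + ENNReal.ofReal ε := by
      by_contra hcon
      push_neg at hcon
      have : varOn (distFun Ω) γ I ≤ varOn (distFun Ω) γ I - ENNReal.ofReal ε := by
        refine varOn_le_of_Icc γ fun a b ha hb hab => ?_
        have := (hcon a b ha hb hab).le
        exact ENNReal.le_sub_of_add_le_right ENNReal.ofReal_ne_top this
      exact absurd this (not_le.mpr (ENNReal.sub_lt_self hV h0 hc))
    refine ⟨a, b, ha, hb, hab, fun s t hs ht hst hcase => ?_⟩
    have hfin : ∀ J, varOn (distFun Ω) γ J ≤ varOn (distFun Ω) γ I → varOn (distFun Ω) γ J ≠ ⊤ :=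
      fun J hJ => (hJ.trans_lt (lt_top_iff_ne_top.mpr hV)).ne
    rcases hcase with hta | hbs
    · -- s ≤ t ≤ a ≤ b
      have key : varOn (distFun Ω) γ (Icc s t) + varOn (distFun Ω) γ (Icc t b) ≤
          varOn (distFun Ω) γ (Icc t b) + ENNReal.ofReal ε := by
        calc varOn (distFun Ω) γ (Icc s t) + varOn (distFun Ω) γ (Icc t b) ≤
              varOn (distFun Ω) γ (Icc s b) := varOn_superadd γ hst (hta.trans hab)
          _ ≤ varOn (distFun Ω) γ I := varOn_mono γ (hconn.out hs hb)
          _ ≤ varOn (distFun Ω) γ (Icc a b) + ENNReal.ofReal ε := hV2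
          _ ≤ varOn (distFun Ω) γ (Icc t b) + ENNReal.ofReal ε := by
              gcongr
              exact varOn_mono γ (Icc_subset_Icc_left hta)
      have hfin2 : varOn (distFun Ω) γ (Icc t b) ≠ ⊤ :=
        hfin _ (varOn_mono γ (hconn.out ht hb))
      rw [add_comm (varOn (distFun Ω) γ (Icc s t))] at key
      rwa [ENNReal.add_le_add_iff_left hfin2] at key
    · -- a ≤ b ≤ s ≤ t
      have key : varOn (distFun Ω) γ (Icc a s) + varOn (distFun Ω) γ (Icc s t) ≤
          varOn (distFun Ω) γ (Icc a s) + ENNReal.ofReal ε := by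
        calc varOn (distFun Ω) γ (Icc a s) + varOn (distFun Ω) γ (Icc s t) ≤
              varOn (distFun Ω) γ (Icc a t) := varOn_superadd γ (hab.trans hbs) hst
          _ ≤ varOn (distFun Ω) γ I := varOn_mono γ (hconn.out ha ht)
          _ ≤ varOn (distFun Ω) γ (Icc a b) + ENNReal.ofReal ε := hV2
          _ ≤ varOn (distFun Ω) γ (Icc a s) + ENNReal.ofReal ε := by
              gcongr
              exact varOn_mono γ (Icc_subset_Icc_right hbs)
      have hfin2 : varOn (distFun Ω) γ (Icc a s) ≠ ⊤ :=
        hfin _ (varOn_mono γ (hconn.out ha hs))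
      rwa [ENNReal.add_le_add_iff_left hfin2] at key

lemma continuousOn_of_compacts {A : ℝ} {γ : ℝ → Ω} {I : Set ℝ} (hconn : I.OrdConnected)
    (h : ∀ a b : ℝ, a ≤ b → Icc a b ⊆ I → IsUniformCurve A γ (Icc a b)) :
    ContinuousOn γ I := by
  intro t ht
  obtain ⟨a, b, ha, hb, hat, htb, δ, hδ, hball⟩ : ∃ a b, a ∈ I ∧ b ∈ I ∧ a ≤ t ∧ t ≤ b ∧
      ∃ δ > 0, ∀ s ∈ I, |s - t| < δ → s ∈ Icc a b := by
    by_cases h1 : (I ∩ Iio t).Nonempty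
    · obtain ⟨a, haI, hat⟩ := h1
      have hat' : a < t := hat
      by_cases h2 : (I ∩ Ioi t).Nonempty
      · obtain ⟨b, hbI, htb⟩ := h2
        have htb' : t < b := htb
        refine ⟨a, b, haI, hbI, hat'.le, htb'.le, min (t - a) (b - t),
          lt_min (by linarith) (by linarith), fun s hs habs => ?_⟩
        obtain ⟨h₁, h₂⟩ := abs_sub_lt_iff.mp habs
        have hd1 : min (t - a) (b - t) ≤ t - a := min_le_left _ _
        have hd2 : min (t - a) (b - t) ≤ b - t := min_le_right _ _
        constructor <;> [skip; skip] <;> linarith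
      · refine ⟨a, t, haI, ht, hat'.le, le_rfl, t - a, by linarith, fun s hs habs => ?_⟩
        obtain ⟨h₁, h₂⟩ := abs_sub_lt_iff.mp habs
        have hsle : s ≤ t := by
          by_contra hc
          exact h2 ⟨s, hs, lt_of_not_ge hc⟩
        exact ⟨by linarith, hsle⟩
    · by_cases h2 : (I ∩ Ioi t).Nonempty
      · obtain ⟨b, hbI, htb⟩ := h2
        have htb' : t < b := htb
        refine ⟨t, b, ht, hbI, le_rfl, htb'.le, b - t, by linarith, fun s hs habs => ?_⟩
        obtain ⟨h₁, h₂⟩ := abs_sub_lt_iff.mp habs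
        have hsge : t ≤ s := by
          by_contra hc
          exact h1 ⟨s, hs, lt_of_not_ge hc⟩
        exact ⟨hsge, by linarith⟩
      · refine ⟨t, t, ht, ht, le_rfl, le_rfl, 1, one_pos, fun s hs habs => ?_⟩
        have hsge : t ≤ s := by
          by_contra hc; exact h1 ⟨s, hs, lt_of_not_ge hc⟩
        have hsle : s ≤ t := by
          by_contra hc; exact h2 ⟨s, hs, lt_of_not_ge hc⟩
        exact ⟨hsge, hsle⟩
  have hcont : ContinuousOn γ (Icc a b) :=
    (h a b (hat.trans htb) (hconn.out ha hb)).2.2.1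
  have hmem : Icc a b ∈ 𝓝[I] t := by
    rw [mem_nhdsWithin_iff]
    refine ⟨δ, hδ, fun s hs => ?_⟩
    obtain ⟨hs1, hs2⟩ := hs
    rw [Metric.mem_ball, Real.dist_eq] at hs1
    exact hball s hs2 hs1
  exact (hcont t ⟨hat, htb⟩).mono_of_mem_nhdsWithin hmem

lemma left_min_tendsto {γ : ℝ → Ω} {I : Set ℝ} (hcont : ContinuousOn γ I)
    [hNB : (leftEndFilter I).NeBot]
    {gm : UniformSpace.Completion Ω}
    (hgm : Tendsto (fun s => (γ s : UniformSpace.Completion Ω)) (leftEndFilter I) (𝓝 gm))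
    {a : ℝ} (ha : a ∈ I) :
    Tendsto (fun s => (γ (min s a) : UniformSpace.Completion Ω)) (leftEndFilter I) (𝓝 gm) := by
  rcases leftEndFilter_dichotomy (I := I) with ⟨m, hleast, hfil⟩ | hev
  · rw [hfil] at hgm ⊢
    haveI : (𝓝[I] m).NeBot := hfil ▸ hNB
    have hma : m ≤ a := hleast.2 ha
    have htm : Tendsto (fun s => (γ s : UniformSpace.Completion Ω)) (𝓝[I] m)
        (𝓝 (γ m : UniformSpace.Completion Ω)) :=
      ((UniformSpace.Completion.continuous_coe Ω).tendsto _).comp (hcont m hleast.1)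
    have e1 : gm = (γ m : UniformSpace.Completion Ω) := tendsto_nhds_unique hgm htm
    rw [e1]
    have hmin_tend : Tendsto (fun s => min s a) (𝓝[I] m) (𝓝[I] m) := by
      rw [tendsto_nhdsWithin_iff]
      constructor
      · have h1 : Tendsto (fun s => min s a) (𝓝 m) (𝓝 (min m a)) :=
          ((continuous_id.min continuous_const).tendsto m)
        rw [min_eq_left hma] at h1
        exact h1.mono_left nhdsWithin_le_nhds
      · filter_upwards [eventually_mem_nhdsWithin] with s hs
        rcases le_total s a with h' | h'
        · rwa [min_eq_left h']
        · rwa [min_eq_right h']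
    exact htm.comp hmin_tend
  · have heq : (fun s => (γ (min s a) : UniformSpace.Completion Ω)) =ᶠ[leftEndFilter I]
        (fun s => (γ s : UniformSpace.Completion Ω)) := by
      filter_upwards [hev a ha] with s hs
      rw [min_eq_left hs.2]
    exact hgm.congr' heq.symm

lemma right_max_tendsto {γ : ℝ → Ω} {I : Set ℝ} (hcont : ContinuousOn γ I)
    [hNB : (rightEndFilter I).NeBot]
    {gp : UniformSpace.Completion Ω}
    (hgp : Tendsto (fun s => (γ s : UniformSpace.Completion Ω)) (rightEndFilter I) (𝓝 gp))
    {b : ℝ} (hb : b ∈ I) :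
    Tendsto (fun s => (γ (max s b) : UniformSpace.Completion Ω)) (rightEndFilter I) (𝓝 gp) := by
  rcases rightEndFilter_dichotomy (I := I) with ⟨m, hgreat, hfil⟩ | hev
  · rw [hfil] at hgp ⊢
    haveI : (𝓝[I] m).NeBot := hfil ▸ hNB
    have hbm : b ≤ m := hgreat.2 hb
    have htm : Tendsto (fun s => (γ s : UniformSpace.Completion Ω)) (𝓝[I] m)
        (𝓝 (γ m : UniformSpace.Completion Ω)) :=
      ((UniformSpace.Completion.continuous_coe Ω).tendsto _).comp (hcont m hgreat.1)
    have e1 : gp = (γ m : UniformSpace.Completion Ω) := tendsto_nhds_unique hgp htm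
    rw [e1]
    have hmax_tend : Tendsto (fun s => max s b) (𝓝[I] m) (𝓝[I] m) := by
      rw [tendsto_nhdsWithin_iff]
      constructor
      · have h1 : Tendsto (fun s => max s b) (𝓝 m) (𝓝 (max m b)) :=
          ((continuous_id.max continuous_const).tendsto m)
        rw [max_eq_left hbm] at h1
        exact h1.mono_left nhdsWithin_le_nhds
      · filter_upwards [eventually_mem_nhdsWithin] with s hs
        rcases le_total s b with h' | h'
        · rwa [max_eq_right h']
        · rwa [max_eq_left h']
    exact htm.comp hmax_tend
  · have heq : (fun s => (γ (max s b) : UniformSpace.Completion Ω)) =ᶠ[rightEndFilter I]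
        (fun s => (γ s : UniformSpace.Completion Ω)) := by
      filter_upwards [hev b hb] with s hs
      rw [max_eq_left hs.2]
    exact hgp.congr' heq.symm

lemma dist_le_of_tail {γ : ℝ → Ω} {I : Set ℝ} (hconn : I.OrdConnected) {ε : ℝ}
    {a b : ℝ} (htail : ∀ s t, s ∈ I → t ∈ I → s ≤ t → (t ≤ a ∨ b ≤ s) →
      varOn (distFun Ω) γ (Icc s t) ≤ ENNReal.ofReal ε) (hε : 0 ≤ ε)
    {s t : ℝ} (hs : s ∈ I) (ht : t ∈ I) (hcase : (s ≤ a ∧ t ≤ a) ∨ (b ≤ s ∧ b ≤ t)) :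
    dist (γ s) (γ t) ≤ ε := by
  rcases le_total s t with hst | hst
  · have h1 : ENNReal.ofReal (dist (γ s) (γ t)) ≤ varOn (distFun Ω) γ (Icc s t) :=
      ofReal_dist_le_varOn γ (left_mem_Icc.mpr hst) (right_mem_Icc.mpr hst) hst
    have h2 := htail s t hs ht hst (by rcases hcase with ⟨_, h⟩ | ⟨h, _⟩; exacts [Or.inl h, Or.inr h])
    exact (ENNReal.ofReal_le_ofReal_iff hε).mp (h1.trans h2)
  · rw [dist_comm]
    have h1 : ENNReal.ofReal (dist (γ t) (γ s)) ≤ varOn (distFun Ω) γ (Icc t s) :=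
      ofReal_dist_le_varOn γ (left_mem_Icc.mpr hst) (right_mem_Icc.mpr hst) hst
    have h2 := htail t s ht hs hst (by rcases hcase with ⟨h, _⟩ | ⟨_, h⟩; exacts [Or.inl h, Or.inr h])
    exact (ENNReal.ofReal_le_ofReal_iff hε).mp (h1.trans h2)

lemma exists_left_limit {γ : ℝ → Ω} {I : Set ℝ} (hne : I.Nonempty) (hconn : I.OrdConnected)
    (hcont : ContinuousOn γ I) (hV : varOn (distFun Ω) γ I ≠ ⊤) :
    ∃ gm : UniformSpace.Completion Ω,
      Tendsto (fun s => (γ s : UniformSpace.Completion Ω)) (leftEndFilter I) (𝓝 gm) := by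
  haveI := leftEndFilter_neBot hne
  rcases leftEndFilter_dichotomy (I := I) with ⟨m, hleast, hfil⟩ | hev
  · refine ⟨(γ m : UniformSpace.Completion Ω), ?_⟩
    rw [hfil]
    exact ((UniformSpace.Completion.continuous_coe Ω).tendsto _).comp (hcont m hleast.1)
  · set f : ℝ → UniformSpace.Completion Ω := fun s => (γ s : UniformSpace.Completion Ω)
    have hC : Cauchy (Filter.map f (leftEndFilter I)) := by
      rw [Metric.cauchy_iff]
      refine ⟨Filter.map_neBot, fun ε hε => ?_⟩
      obtain ⟨a, b, ha, hb, hab, htail⟩ := exists_tail_bound hne hconn hV (half_pos hε)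
      refine ⟨f '' {s | s ∈ I ∧ s ≤ a}, ?_, ?_⟩
      · exact Filter.image_mem_map (hev a ha)
      · rintro x ⟨s, ⟨hsI, hsa⟩, rfl⟩ y ⟨t, ⟨htI, hta⟩, rfl⟩
        have : dist (γ s) (γ t) ≤ ε / 2 :=
          dist_le_of_tail hconn htail (half_pos hε).le hsI htI (Or.inl ⟨hsa, hta⟩)
        calc dist (f s) (f t) = dist (γ s) (γ t) := UniformSpace.Completion.dist_eq _ _
          _ ≤ ε / 2 := this
          _ < ε := half_lt_self hε
    exact CompleteSpace.complete hC

lemma exists_right_limit {γ : ℝ → Ω} {I : Set ℝ} (hne : I.Nonempty) (hconn : I.OrdConnected)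
    (hcont : ContinuousOn γ I) (hV : varOn (distFun Ω) γ I ≠ ⊤) :
    ∃ gp : UniformSpace.Completion Ω,
      Tendsto (fun s => (γ s : UniformSpace.Completion Ω)) (rightEndFilter I) (𝓝 gp) := by
  haveI := rightEndFilter_neBot hne
  rcases rightEndFilter_dichotomy (I := I) with ⟨m, hgreat, hfil⟩ | hev
  · refine ⟨(γ m : UniformSpace.Completion Ω), ?_⟩
    rw [hfil]
    exact ((UniformSpace.Completion.continuous_coe Ω).tendsto _).comp (hcont m hgreat.1)
  · set f : ℝ → UniformSpace.Completion Ω := fun s => (γ s : UniformSpace.Completion Ω)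
    have hC : Cauchy (Filter.map f (rightEndFilter I)) := by
      rw [Metric.cauchy_iff]
      refine ⟨Filter.map_neBot, fun ε hε => ?_⟩
      obtain ⟨a, b, ha, hb, hab, htail⟩ := exists_tail_bound hne hconn hV (half_pos hε)
      refine ⟨f '' {s | s ∈ I ∧ b ≤ s}, ?_, ?_⟩
      · exact Filter.image_mem_map (hev b hb)
      · rintro x ⟨s, ⟨hsI, hsa⟩, rfl⟩ y ⟨t, ⟨htI, hta⟩, rfl⟩
        have : dist (γ s) (γ t) ≤ ε / 2 :=
          dist_le_of_tail hconn htail (half_pos hε).le hsI htI (Or.inr ⟨hsa, hta⟩)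
        calc dist (f s) (f t) = dist (γ s) (γ t) := UniformSpace.Completion.dist_eq _ _
          _ ≤ ε / 2 := this
          _ < ε := half_lt_self hε
    exact CompleteSpace.complete hC


end AuxStatement10

/-- If `γ : I → Ω` is a curve in an incomplete metric space whose
restriction to every compact subinterval of `I` is an `A`-uniform curve, then `γ` itself
is an `A`-uniform curve. -/
theorem statement10 {Ω : Type*} [MetricSpace Ω] (hinc : ¬ CompleteSpace Ω)
    (A : ℝ) (hA : 1 ≤ A) (γ : ℝ → Ω) (I : Set ℝ)
    (hne : I.Nonempty) (hconn : I.OrdConnected)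
    (h : ∀ a b : ℝ, a ≤ b → Icc a b ⊆ I → IsUniformCurve A γ (Icc a b)) :
    IsUniformCurve A γ I := by
  classical
  have hcontI : ContinuousOn γ I := continuousOn_of_compacts hconn h
  haveI hF : (leftEndFilter I).NeBot := leftEndFilter_neBot hne
  haveI hG : (rightEndFilter I).NeBot := rightEndFilter_neBot hne
  have hA0 : 0 < A := lt_of_lt_of_le one_pos hA
  have hvar_cc : ∀ a b, a ∈ I → b ∈ I → a ≤ b →
      varOn (distFun Ω) γ (Icc a b) ≤ ENNReal.ofReal (A * dist (γ a) (γ b)) :=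
    fun a b ha hb hab => var_bound_of_compact hab (h a b hab (hconn.out ha hb))
  have hminmem : ∀ {x y : ℝ}, x ∈ I → y ∈ I → min x y ∈ I := by
    intro x y hx hy
    rcases le_total x y with h' | h'
    · rwa [min_eq_left h']
    · rwa [min_eq_right h']
  have hmaxmem : ∀ {x y : ℝ}, x ∈ I → y ∈ I → max x y ∈ I := by
    intro x y hx hy
    rcases le_total x y with h' | h'
    · rwa [max_eq_right h']
    · rwa [max_eq_left h']
  refine ⟨hne, hconn, hcontI, ?_, ?_⟩
  · by_cases hV : varOn (distFun Ω) γ I = ⊤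
    · -- non-rectifiable branch
      refine Or.inr ⟨hV, ?_⟩
      rw [Filter.tendsto_atTop]
      intro M
      set M' : ℝ := max M 0 with hM'def
      have hM'0 : 0 ≤ M' := le_max_right _ _
      have hMM' : M ≤ M' := le_max_left _ _
      have hbig : ∀ K : ℝ≥0∞, K ≠ ⊤ → ∃ a b, a ∈ I ∧ b ∈ I ∧ a ≤ b ∧
          K < varOn (distFun Ω) γ (Icc a b) := by
        intro K hK
        by_contra hcon
        push_neg at hcon
        have : varOn (distFun Ω) γ I ≤ K :=
          varOn_le_of_Icc γ fun a b ha hb hab => hcon a b ha hb hab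
        rw [hV] at this
        exact hK (top_le_iff.mp this)
      rcases leftEndFilter_dichotomy (I := I) with ⟨m, hleast, hfilL⟩ | hevL <;>
        rcases rightEndFilter_dichotomy (I := I) with ⟨m', hgreat, hfilR⟩ | hevR
      · -- both endpoints attained: I is compact, contradiction
        exfalso
        have hIeq : I = Icc m m' :=
          Subset.antisymm (fun x hx => ⟨hleast.2 hx, hgreat.2 hx⟩)
            (hconn.out hleast.1 hgreat.1)
        have hmm' : m ≤ m' := hleast.2 hgreat.1
        have := hvar_cc m m' hleast.1 hgreat.1 hmm'
        rw [← hIeq, hV] at this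
        exact ENNReal.ofReal_ne_top (top_le_iff.mp this)
      · -- left min, right escaping
        obtain ⟨a, b, ha, hb, hab, hKlt⟩ :=
          hbig (ENNReal.ofReal (A * (M' + 1))) ENNReal.ofReal_ne_top
        have hmb : m ≤ b := hleast.2 hb
        have hKmb : ENNReal.ofReal (A * (M' + 1)) < varOn (distFun Ω) γ (Icc m b) :=
          hKlt.trans_le (varOn_mono γ (Icc_subset_Icc (hleast.2 ha) le_rfl))
        have hev1 : ∀ᶠ s in leftEndFilter I, dist (γ s) (γ m) < 1 := by
          rw [hfilL]
          exact Metric.tendsto_nhds.mp (hcontI m hleast.1) 1 one_pos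
        filter_upwards [Filter.prod_mem_prod hev1 (hevR b hb)] with pq hpq
        obtain ⟨h1, h2, h3⟩ := hpq
        have hmt : m ≤ pq.2 := hmb.trans h3
        have hvt : ENNReal.ofReal (A * (M' + 1)) <
            ENNReal.ofReal (A * dist (γ m) (γ pq.2)) :=
          lt_of_lt_of_le (hKmb.trans_le (varOn_mono γ (Icc_subset_Icc le_rfl h3)))
            (hvar_cc m pq.2 hleast.1 h2 hmt)
        have hlt : A * (M' + 1) < A * dist (γ m) (γ pq.2) :=
          (ENNReal.ofReal_lt_ofReal_iff_of_nonneg (by positivity)).mp hvt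
        have hlt2 : M' + 1 < dist (γ m) (γ pq.2) := (mul_lt_mul_iff_right₀ hA0).mp hlt
        have h1' : dist (γ pq.1) (γ m) < 1 := h1
        have htri := dist_triangle (γ m) (γ pq.1) (γ pq.2)
        have hcomm : dist (γ m) (γ pq.1) = dist (γ pq.1) (γ m) := dist_comm _ _
        linarith
      · -- left escaping, right max
        obtain ⟨a, b, ha, hb, hab, hKlt⟩ :=
          hbig (ENNReal.ofReal (A * (M' + 1))) ENNReal.ofReal_ne_top
        have hbm : b ≤ m' := hgreat.2 hb
        have hKam : ENNReal.ofReal (A * (M' + 1)) < varOn (distFun Ω) γ (Icc a m') :=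
          hKlt.trans_le (varOn_mono γ (Icc_subset_Icc le_rfl hbm))
        have hev1 : ∀ᶠ t in rightEndFilter I, dist (γ t) (γ m') < 1 := by
          rw [hfilR]
          exact Metric.tendsto_nhds.mp (hcontI m' hgreat.1) 1 one_pos
        filter_upwards [Filter.prod_mem_prod (hevL a ha) hev1] with pq hpq
        obtain ⟨⟨h1, h2⟩, h3⟩ := hpq
        have hsm : pq.1 ≤ m' := h2.trans (hab.trans hbm)
        have hvt : ENNReal.ofReal (A * (M' + 1)) <
            ENNReal.ofReal (A * dist (γ pq.1) (γ m')) :=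
          lt_of_lt_of_le (hKam.trans_le (varOn_mono γ (Icc_subset_Icc h2 le_rfl)))
            (hvar_cc pq.1 m' h1 hgreat.1 hsm)
        have hlt : A * (M' + 1) < A * dist (γ pq.1) (γ m') :=
          (ENNReal.ofReal_lt_ofReal_iff_of_nonneg (by positivity)).mp hvt
        have hlt2 : M' + 1 < dist (γ pq.1) (γ m') := (mul_lt_mul_iff_right₀ hA0).mp hlt
        have h3' : dist (γ pq.2) (γ m') < 1 := h3
        have htri := dist_triangle (γ pq.1) (γ pq.2) (γ m')
        linarith
      · -- both escaping
        obtain ⟨a, b, ha, hb, hab, hKlt⟩ :=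
          hbig (ENNReal.ofReal (A * M')) ENNReal.ofReal_ne_top
        filter_upwards [Filter.prod_mem_prod (hevL a ha) (hevR b hb)] with pq hpq
        obtain ⟨⟨h1, h2⟩, h3, h4⟩ := hpq
        have hst : pq.1 ≤ pq.2 := h2.trans (hab.trans h4)
        have hvt : ENNReal.ofReal (A * M') <
            ENNReal.ofReal (A * dist (γ pq.1) (γ pq.2)) :=
          lt_of_lt_of_le (hKlt.trans_le (varOn_mono γ (Icc_subset_Icc h2 h4)))
            (hvar_cc pq.1 pq.2 h1 h3 hst)
        have hlt : A * M' < A * dist (γ pq.1) (γ pq.2) :=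
          (ENNReal.ofReal_lt_ofReal_iff_of_nonneg (by positivity)).mp hvt
        have hlt2 : M' < dist (γ pq.1) (γ pq.2) := (mul_lt_mul_iff_right₀ hA0).mp hlt
        linarith
    · -- rectifiable branch
      obtain ⟨gm, hgm⟩ := exists_left_limit hne hconn hcontI hV
      obtain ⟨gp, hgp⟩ := exists_right_limit hne hconn hcontI hV
      refine Or.inl ⟨hV, gm, gp, hgm, hgp, ?_⟩
      refine varOn_le_of_Icc γ fun a b ha hb hab => ?_
      haveI : (leftEndFilter I ×ˢ rightEndFilter I).NeBot := Filter.prod_neBot.mpr ⟨hF, hG⟩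
      have hminT := left_min_tendsto hcontI hgm ha
      have hmaxT := right_max_tendsto hcontI hgp hb
      have h1 : Tendsto (fun pq : ℝ × ℝ =>
          ((γ (min pq.1 a) : UniformSpace.Completion Ω),
           (γ (max pq.2 b) : UniformSpace.Completion Ω)))
          (leftEndFilter I ×ˢ rightEndFilter I) (𝓝 (gm, gp)) := by
        rw [nhds_prod_eq]
        exact (hminT.comp tendsto_fst).prodMk (hmaxT.comp tendsto_snd)
      have h2 : Tendsto (fun pq : ℝ × ℝ =>
          ENNReal.ofReal (A * dist ((γ (min pq.1 a) : UniformSpace.Completion Ω))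
            ((γ (max pq.2 b) : UniformSpace.Completion Ω))))
          (leftEndFilter I ×ˢ rightEndFilter I)
          (𝓝 (ENNReal.ofReal (A * dist gm gp))) :=
        (ENNReal.continuous_ofReal.tendsto _).comp
          (((continuous_dist.tendsto (gm, gp)).comp h1).const_mul A)
      refine ge_of_tendsto h2 ?_
      filter_upwards [Filter.prod_mem_prod (leftEndFilter_mem (I := I))
        (rightEndFilter_mem (I := I))] with pq hpq
      obtain ⟨hs, ht⟩ := hpq
      have hsa : min pq.1 a ∈ I := hminmem hs ha
      have htb : max pq.2 b ∈ I := hmaxmem ht hb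
      have hle : min pq.1 a ≤ max pq.2 b :=
        (min_le_right _ _).trans (hab.trans (le_max_right _ _))
      calc varOn (distFun Ω) γ (Icc a b)
          ≤ varOn (distFun Ω) γ (Icc (min pq.1 a) (max pq.2 b)) :=
            varOn_mono γ (Icc_subset_Icc (min_le_right _ _) (le_max_right _ _))
        _ ≤ ENNReal.ofReal (A * dist (γ (min pq.1 a)) (γ (max pq.2 b))) :=
            hvar_cc _ _ hsa htb hle
        _ = ENNReal.ofReal (A * dist ((γ (min pq.1 a) : UniformSpace.Completion Ω))
              ((γ (max pq.2 b) : UniformSpace.Completion Ω))) := by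
            rw [UniformSpace.Completion.dist_eq]
  · -- condition (v)
    intro t ht
    by_contra hcon
    rw [not_le, lt_min_iff] at hcon
    obtain ⟨hX, hY⟩ := hcon
    set C := ENNReal.ofReal (A * bdryDistWrt (distFun Ω) (γ t)) with hC
    obtain ⟨a, b, ha, hb, hab, hgt⟩ : ∃ a b, a ∈ I ∩ Iic t ∧ b ∈ I ∩ Iic t ∧ a ≤ b ∧
        C < varOn (distFun Ω) γ (Icc a b) := by
      by_contra hno
      push_neg at hno
      exact absurd (varOn_le_of_Icc γ fun a b ha hb hab => hno a b ha hb hab) (not_le.mpr hX)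
    obtain ⟨a', b', ha', hb', hab', hgt'⟩ : ∃ a b, a ∈ I ∩ Ici t ∧ b ∈ I ∩ Ici t ∧ a ≤ b ∧
        C < varOn (distFun Ω) γ (Icc a b) := by
      by_contra hno
      push_neg at hno
      exact absurd (varOn_le_of_Icc γ fun a b ha hb hab => hno a b ha hb hab) (not_le.mpr hY)
    have hat : a ≤ t := ha.2
    have htb' : t ≤ b' := hb'.2
    have hgt1 : C < varOn (distFun Ω) γ (Icc a t) :=
      hgt.trans_le (varOn_mono γ (Icc_subset_Icc le_rfl hb.2))
    have hgt2 : C < varOn (distFun Ω) γ (Icc t b') :=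
      hgt'.trans_le (varOn_mono γ (Icc_subset_Icc ha'.2 le_rfl))
    have hcurve := h a b' (hat.trans htb') (hconn.out ha.1 hb'.1)
    have h5 := hcurve.2.2.2.2 t ⟨hat, htb'⟩
    have hint1 : Icc a b' ∩ Iic t = Icc a t := by
      ext x
      simp only [Set.mem_inter_iff, Set.mem_Icc, Set.mem_Iic]
      constructor
      · rintro ⟨⟨hx1, hx2⟩, hx3⟩; exact ⟨hx1, hx3⟩
      · rintro ⟨hx1, hx2⟩; exact ⟨⟨hx1, hx2.trans htb'⟩, hx2⟩
    have hint2 : Icc a b' ∩ Ici t = Icc t b' := by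
      ext x
      simp only [Set.mem_inter_iff, Set.mem_Icc, Set.mem_Ici]
      constructor
      · rintro ⟨⟨hx1, hx2⟩, hx3⟩; exact ⟨hx3, hx2⟩
      · rintro ⟨hx1, hx2⟩; exact ⟨⟨hat.trans hx1, hx2⟩, hx1⟩
    rw [hint1, hint2] at h5
    exact absurd h5 (not_le.mpr (lt_min hgt1 hgt2))

end Paper

end
end
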